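/- arXiv:1105.4999 — 10 statements merged into one kernel-verified Lean document; each statement's English description precedes it below -/
import Mathlib

section
/- For any positive semidefinite M×M complex matrix S, any N×M complex matrix H, and any real α with 0 < α ≤ 1, one has α · log det(I + H (S/α) Hᴴ) ≤ log det(I + H S Hᴴ), with equality when α = 1. -/
open Matrix ComplexOrder

lemma det_one_add_real_smul {N : ℕ} {A : Matrix (Fin N) (Fin N) ℂ} (hA : A.IsHermitian)
    (c : ℝ) :
    (1 + (c : ℂ) • A).det = ((∏ i, (1 + c * hA.eigenvalues i) : ℝ) : ℂ) := by
  set U := (hA.eigenvectorUnitary : Matrix (Fin N) (Fin N) ℂ) with hUdef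
  have hU : U * star U = 1 := mem_unitaryGroup_iff.mp hA.eigenvectorUnitary.2
  have key : 1 + (c : ℂ) • A
      = U * (1 + (c : ℂ) • diagonal (RCLike.ofReal ∘ hA.eigenvalues)) * star U := by
    rw [mul_add, add_mul, mul_one, hU, Matrix.mul_smul, Matrix.smul_mul,
      hUdef, ← Unitary.conjStarAlgAut_apply (S := ℂ), ← hA.spectral_theorem]
  rw [key, det_mul_right_comm, hU, one_mul]
  have : (1 : Matrix (Fin N) (Fin N) ℂ) + (c : ℂ) • diagonal (RCLike.ofReal ∘ hA.eigenvalues)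
      = diagonal (fun i => (1 : ℂ) + c * hA.eigenvalues i) := by
    rw [← diagonal_one, ← diagonal_smul, ← diagonal_add]
    congr 1
  rw [this, det_diagonal]
  push_cast
  rfl

lemma scalar_ineq {lam α : ℝ} (hlam : 0 ≤ lam) (h0 : 0 < α) (h1 : α ≤ 1) :
    α * Real.log (1 + α⁻¹ * lam) ≤ Real.log (1 + lam) := by
  have hs : (0:ℝ) ≤ α⁻¹ * lam := mul_nonneg (inv_nonneg.mpr h0.le) hlam
  have hx : (0:ℝ) < 1 + α⁻¹ * lam := by linarith
  rw [← Real.log_rpow hx]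
  apply Real.log_le_log (Real.rpow_pos_of_pos hx α)
  have := rpow_one_add_le_one_add_mul_self (s := α⁻¹ * lam) (by linarith) h0.le h1
  calc (1 + α⁻¹ * lam) ^ α ≤ 1 + α * (α⁻¹ * lam) := this
    _ = 1 + lam := by field_simp

/-- `α log det(I + H (S/α) Hᴴ) ≤ log det(I + H S Hᴴ)` for `0 < α ≤ 1`, with equality at `α = 1`. -/
theorem stmt2 {M N : ℕ} (S : Matrix (Fin M) (Fin M) ℂ) (hS : S.PosSemidef)
    (H : Matrix (Fin N) (Fin M) ℂ) (α : ℝ) (h0 : 0 < α) (h1 : α ≤ 1) :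
    α * Real.log ((1 + H * (((α : ℂ))⁻¹ • S) * Hᴴ).det.re) ≤
      Real.log ((1 + H * S * Hᴴ).det.re) ∧
    (α = 1 → α * Real.log ((1 + H * (((α : ℂ))⁻¹ • S) * Hᴴ).det.re) =
      Real.log ((1 + H * S * Hᴴ).det.re)) := by
  have hA : (H * S * Hᴴ).PosSemidef := hS.mul_mul_conjTranspose_same H
  set lam := hA.1.eigenvalues with hlam
  have hsmul : H * (((α : ℂ))⁻¹ • S) * Hᴴ = ((α⁻¹ : ℝ) : ℂ) • (H * S * Hᴴ) := by
    rw [Matrix.mul_smul, Matrix.smul_mul]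
    push_cast
    rfl
  have e1 : (1 + H * (((α : ℂ))⁻¹ • S) * Hᴴ).det.re = ∏ i, (1 + α⁻¹ * lam i) := by
    rw [hsmul, det_one_add_real_smul hA.1, Complex.ofReal_re]
  have e2 : (1 + H * S * Hᴴ).det.re = ∏ i, (1 + lam i) := by
    have := det_one_add_real_smul hA.1 1
    rw [Complex.ofReal_one, one_smul] at this
    rw [this, Complex.ofReal_re]
    simp [hlam]
  have hnn : ∀ i, 0 ≤ lam i := fun i => hA.eigenvalues_nonneg i
  have hpos1 : ∀ i ∈ Finset.univ, (1 : ℝ) + α⁻¹ * lam i ≠ 0 := by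
    intro i _
    have := mul_nonneg (inv_nonneg.mpr h0.le) (hnn i)
    positivity
  have hpos2 : ∀ i ∈ Finset.univ, (1 : ℝ) + lam i ≠ 0 := by
    intro i _
    have := hnn i; positivity
  rw [e1, e2, Real.log_prod hpos1, Real.log_prod hpos2, Finset.mul_sum]
  constructor
  · exact Finset.sum_le_sum fun i _ => scalar_ineq (hnn i) h0 h1
  · intro hα
    subst hα
    simp
end

section
/- The function S ↦ log det(I + H S Hᴴ) is concave on the cone of M×M Hermitian positive semidefinite matrices S, for any fixed N×M complex matrix H. -/
open Matrix ComplexOrder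

-- Key determinant inequality: weighted AM-GM for determinants of PosDef matrices.
private lemma stmt3_aux_key {n : ℕ} {A B : Matrix (Fin n) (Fin n) ℂ} (hA : A.PosDef) (hB : B.PosDef)
    (t : ℝ) (ht0 : 0 ≤ t) (ht1 : t ≤ 1) :
    A.det.re * (B.det.re / A.det.re) ^ (1 - t) ≤ ((t : ℂ) • A + ((1 - t : ℝ) : ℂ) • B).det.re := by
  classical
  set C := (open scoped MatrixOrder in CFC.sqrt A) with hCdef
  have hCherm : C.IsHermitian := (open scoped MatrixOrder in (CFC.sqrt_nonneg A).posSemidef.1)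
  have hCC : C * C = A :=
    (open scoped MatrixOrder in CFC.sqrt_mul_sqrt_self A hA.posSemidef.nonneg)
  have hdetA : (0 : ℂ) < A.det := hA.det_pos
  have hdetCne : C.det ≠ 0 := by
    intro h
    have : A.det = 0 := by rw [← hCC, det_mul, h, mul_zero]
    exact hdetA.ne' this
  have hCunit : IsUnit C.det := isUnit_iff_ne_zero.mpr hdetCne
  have hCinv : C * C⁻¹ = 1 := mul_nonsing_inv C hCunit
  have hCinv' : C⁻¹ * C = 1 := nonsing_inv_mul C hCunit
  have hCinvherm : (C⁻¹).IsHermitian := hCherm.inv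
  set Mm := C⁻¹ * B * C⁻¹ᴴ with hMdef
  have hMpsd : Mm.PosSemidef := hB.posSemidef.mul_mul_conjTranspose_same C⁻¹
  -- the congruence identity
  have hcong : (t : ℂ) • A + ((1 - t : ℝ) : ℂ) • B
      = C * ((t : ℂ) • (1 : Matrix (Fin n) (Fin n) ℂ) + ((1 - t : ℝ) : ℂ) • Mm) * C := by
    rw [hMdef, hCinvherm.eq]
    rw [Matrix.mul_add, Matrix.add_mul, Matrix.mul_smul, Matrix.mul_smul, Matrix.smul_mul,
      Matrix.smul_mul, Matrix.mul_one, hCC]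
    congr 1
    rw [show C * (C⁻¹ * B * C⁻¹) * C = (C * C⁻¹) * B * (C⁻¹ * C) by noncomm_ring, hCinv, hCinv',
      Matrix.one_mul, Matrix.mul_one]
  -- spectral data of Mm
  set lam := hMpsd.1.eigenvalues with hlam
  have hlam0 : ∀ i, 0 ≤ lam i := hMpsd.eigenvalues_nonneg
  set U : Matrix (Fin n) (Fin n) ℂ := (hMpsd.1.eigenvectorUnitary : Matrix (Fin n) (Fin n) ℂ) with hU
  have hUU : U * star U = 1 := Matrix.mem_unitaryGroup_iff.mp hMpsd.1.eigenvectorUnitary.2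
  have hspec : Mm = U * Matrix.diagonal (RCLike.ofReal ∘ lam) * star U := hMpsd.1.spectral_theorem
  set K := (t : ℂ) • (1 : Matrix (Fin n) (Fin n) ℂ) + ((1 - t : ℝ) : ℂ) • Mm with hK
  have hKU : K = U * ((t : ℂ) • (1 : Matrix (Fin n) (Fin n) ℂ)
      + ((1 - t : ℝ) : ℂ) • Matrix.diagonal (RCLike.ofReal ∘ lam)) * star U := by
    rw [hK, Matrix.mul_add, Matrix.add_mul, Matrix.mul_smul, Matrix.mul_smul, Matrix.smul_mul,
      Matrix.smul_mul, Matrix.mul_one, hUU, ← hspec]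
  have hdiag : (t : ℂ) • (1 : Matrix (Fin n) (Fin n) ℂ)
      + ((1 - t : ℝ) : ℂ) • Matrix.diagonal (RCLike.ofReal ∘ lam)
      = Matrix.diagonal (fun i => ((t + (1 - t) * lam i : ℝ) : ℂ)) := by
    ext i j
    rcases eq_or_ne i j with h | h
    · subst h
      simp [Matrix.diagonal_apply_eq, Matrix.one_apply_eq, Complex.ext_iff]
    · simp [Matrix.diagonal_apply_ne _ h, Matrix.one_apply_ne h]
  have hdetK : K.det = ((∏ i, (t + (1 - t) * lam i) : ℝ) : ℂ) := by
    rw [hKU, hdiag, Matrix.det_mul_right_comm, hUU, Matrix.one_mul, Matrix.det_diagonal]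
    push_cast
    rfl
  have hdetAre : A.det = (A.det.re : ℂ) ∧ 0 < A.det.re := by
    have h := hA.det_pos; rw [Complex.lt_def] at h
    exact ⟨Complex.ext (by simp) (by simp [← h.2]), h.1⟩
  have hdetBre : B.det = (B.det.re : ℂ) ∧ 0 < B.det.re := by
    have h := hB.det_pos; rw [Complex.lt_def] at h
    exact ⟨Complex.ext (by simp) (by simp [← h.2]), h.1⟩
  -- det Mm = det B / det A
  have hdetMm : Mm.det = B.det / A.det := by
    rw [hMdef, hCinvherm.eq, Matrix.det_mul, Matrix.det_mul, Matrix.det_nonsing_inv]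
    have : A.det = C.det * C.det := by rw [← hCC, Matrix.det_mul]
    rw [Ring.inverse_eq_inv]
    field_simp [this]
    rw [this]; ring
  have hprodlam : (∏ i, lam i) = B.det.re / A.det.re := by
    have h1 : Mm.det = ((∏ i, lam i : ℝ) : ℂ) := by
      rw [hMpsd.1.det_eq_prod_eigenvalues]; push_cast; rfl
    have h2 : Mm.det = ((B.det.re / A.det.re : ℝ) : ℂ) := by
      rw [hdetMm]
      conv_lhs => rw [hdetAre.1, hdetBre.1]
      push_cast
      ring
    have := h1.symm.trans h2
    exact_mod_cast this
  -- main determinant computation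
  have hmain : ((t : ℂ) • A + ((1 - t : ℝ) : ℂ) • B).det.re
      = A.det.re * ∏ i, (t + (1 - t) * lam i) := by
    have hAc : C.det * C.det = ((A.det.re : ℝ) : ℂ) := by
      rw [← Matrix.det_mul, hCC]
      exact hdetAre.1
    have hd : ((t : ℂ) • A + ((1 - t : ℝ) : ℂ) • B).det
        = ((A.det.re * ∏ i, (t + (1 - t) * lam i) : ℝ) : ℂ) := by
      rw [hcong, Matrix.det_mul, Matrix.det_mul, hdetK]
      calc C.det * ((∏ i, (t + (1 - t) * lam i) : ℝ) : ℂ) * C.det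
          = (C.det * C.det) * ((∏ i, (t + (1 - t) * lam i) : ℝ) : ℂ) := by ring
        _ = _ := by rw [hAc]; push_cast; ring
    rw [hd, Complex.ofReal_re]
  rw [hmain, ← hprodlam]
  have hAMGM : (∏ i, lam i) ^ (1 - t) ≤ ∏ i, (t + (1 - t) * lam i) := by
    rw [← Real.finset_prod_rpow _ _ (fun i _ => hlam0 i)]
    refine Finset.prod_le_prod (fun i _ => Real.rpow_nonneg (hlam0 i) _) (fun i _ => ?_)
    have := Real.geom_mean_le_arith_mean2_weighted ht0 (by linarith : (0:ℝ) ≤ 1 - t)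
      zero_le_one (hlam0 i) (by ring)
    simpa using this
  exact mul_le_mul_of_nonneg_left hAMGM hdetAre.2.le

/-- Concavity of `S ↦ log det(I + H S Hᴴ)` on the PSD cone. -/
theorem stmt3 {M N : ℕ} (H : Matrix (Fin N) (Fin M) ℂ)
    (S1 S2 : Matrix (Fin M) (Fin M) ℂ) (h1 : S1.PosSemidef) (h2 : S2.PosSemidef)
    (t : ℝ) (ht0 : 0 ≤ t) (ht1 : t ≤ 1) :
    t * Real.log ((1 + H * S1 * Hᴴ).det.re) + (1 - t) * Real.log ((1 + H * S2 * Hᴴ).det.re) ≤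
      Real.log ((1 + H * ((t : ℂ) • S1 + ((1 - t : ℝ) : ℂ) • S2) * Hᴴ).det.re) := by
  set A := 1 + H * S1 * Hᴴ with hAdef
  set B := 1 + H * S2 * Hᴴ with hBdef
  have hA : A.PosDef := Matrix.PosDef.one.add_posSemidef (h1.mul_mul_conjTranspose_same H)
  have hB : B.PosDef := Matrix.PosDef.one.add_posSemidef (h2.mul_mul_conjTranspose_same H)
  have hid : 1 + H * ((t : ℂ) • S1 + ((1 - t : ℝ) : ℂ) • S2) * Hᴴ
      = (t : ℂ) • A + ((1 - t : ℝ) : ℂ) • B := by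
    rw [hAdef, hBdef, smul_add, smul_add, Matrix.mul_add, Matrix.add_mul, Matrix.mul_smul,
      Matrix.mul_smul, Matrix.smul_mul, Matrix.smul_mul]
    have hone : (t : ℂ) • (1 : Matrix (Fin N) (Fin N) ℂ) + ((1 - t : ℝ) : ℂ) • 1 = 1 := by
      rw [← add_smul]
      have : (t : ℂ) + ((1 - t : ℝ) : ℂ) = 1 := by push_cast; ring
      rw [this, one_smul]
    conv_lhs => rw [← hone]
    abel
  rw [hid]
  have key' := stmt3_aux_key hA hB t ht0 ht1
  have ha : 0 < A.det.re := by
    have h := hA.det_pos; rw [Complex.lt_def] at h; exact h.1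
  have hb : 0 < B.det.re := by
    have h := hB.det_pos; rw [Complex.lt_def] at h; exact h.1
  have hba : 0 < B.det.re / A.det.re := div_pos hb ha
  have hlhs : 0 < A.det.re * (B.det.re / A.det.re) ^ (1 - t) :=
    mul_pos ha (Real.rpow_pos_of_pos hba _)
  calc t * Real.log A.det.re + (1 - t) * Real.log B.det.re
      = Real.log (A.det.re * (B.det.re / A.det.re) ^ (1 - t)) := by
        rw [Real.log_mul ha.ne' (Real.rpow_pos_of_pos hba _).ne', Real.log_rpow hba,
          Real.log_div hb.ne' ha.ne']
        ring
    _ ≤ Real.log (((t : ℂ) • A + ((1 - t : ℝ) : ℂ) • B).det.re) :=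
        Real.log_le_log hlhs key'
end

section
/- Let h, g ∈ ℂ^M be nonzero. If Q̄ ≤ |gᴴ ĥ|² P where ĥ = h/‖h‖, then the rank-one matrix S = P ĥ ĥᴴ satisfies tr(S) ≤ P, gᴴ S g ≥ Q̄, and log(1 + hᴴ S h) = log(1 + ‖h‖² P), which is the maximum of log(1 + hᴴ S h) over all PSD S with tr(S) ≤ P. -/
open Matrix ComplexOrder

lemma aux_conj_mul (z : ℂ) : (starRingEnd ℂ) z * z = ((‖z‖^2 : ℝ) : ℂ) := by
  rw [RCLike.conj_mul]; norm_cast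

lemma aux_dot_star_self {M : ℕ} (v : Fin M → ℂ) :
    star v ⬝ᵥ v = ((∑ i, ‖v i‖^2 : ℝ) : ℂ) := by
  push_cast
  simp only [dotProduct, Pi.star_apply, RCLike.star_def]
  refine Finset.sum_congr rfl fun i _ => ?_
  rw [aux_conj_mul]
  norm_cast

lemma aux_vmv {M : ℕ} (a b v : Fin M → ℂ) : vecMulVec a b *ᵥ v = (b ⬝ᵥ v) • a := by
  ext i
  simp only [mulVec, vecMulVec_apply, dotProduct, Pi.smul_apply, smul_eq_mul]
  rw [Finset.sum_mul]
  exact Finset.sum_congr rfl fun j _ => by ring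

lemma aux_trace_vmv {M : ℕ} (a b : Fin M → ℂ) : (vecMulVec a b).trace = a ⬝ᵥ b := by
  simp [Matrix.trace, Matrix.diag, vecMulVec_apply, dotProduct]

lemma aux_star_dot {M : ℕ} (u v : Fin M → ℂ) :
    star u ⬝ᵥ v = (starRingEnd ℂ) (star v ⬝ᵥ u) := by
  simp only [dotProduct, Pi.star_apply, _root_.map_sum, RCLike.star_def, _root_.map_mul,
    Complex.conj_conj]
  exact Finset.sum_congr rfl fun j _ => mul_comm _ _

open scoped MatrixOrder in
/-- Quadratic form of a PSD matrix is bounded by `‖h‖² tr S`. -/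
lemma aux_quad_le_trace {M : ℕ} (S : Matrix (Fin M) (Fin M) ℂ) (hS : S.PosSemidef)
    (h : Fin M → ℂ) :
    (star h ⬝ᵥ S *ᵥ h).re ≤ (∑ j, ‖h j‖^2) * S.trace.re := by
  set B := CFC.sqrt S with hBdef
  have hB : B * B = S := CFC.sqrt_mul_sqrt_self S hS.nonneg
  have hBH : Bᴴ = B := (CFC.sqrt_nonneg S).posSemidef.1
  set w := B *ᵥ h with hw
  have key : star h ⬝ᵥ S *ᵥ h = star w ⬝ᵥ w := by
    rw [hw, star_mulVec, hBH, ← hB, ← mulVec_mulVec, dotProduct_mulVec]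
  have hlhs : (star h ⬝ᵥ S *ᵥ h).re = ∑ i, ‖w i‖^2 := by
    rw [key, aux_dot_star_self, Complex.ofReal_re]
  have hBsym : ∀ i j, B j i = (starRingEnd ℂ) (B i j) := by
    intro i j
    have := congrArg (fun A => A j i) hBH
    simpa [conjTranspose_apply] using this.symm
  have htr : S.trace.re = ∑ i, ∑ j, ‖B i j‖^2 := by
    rw [← hB]
    have hdiag : ∀ i, ((B * B) i i) = ((∑ j, ‖B i j‖^2 : ℝ) : ℂ) := by
      intro i
      rw [Matrix.mul_apply]
      push_cast
      refine Finset.sum_congr rfl fun j _ => ?_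
      rw [hBsym i j, mul_comm, aux_conj_mul]
      norm_cast
    simp only [Matrix.trace, Matrix.diag]
    rw [Complex.re_sum]
    exact Finset.sum_congr rfl fun i _ => by rw [hdiag i, Complex.ofReal_re]
  have hbound : ∀ i, ‖w i‖^2 ≤ (∑ j, ‖h j‖^2) * ∑ j, ‖B i j‖^2 := by
    intro i
    have h1 : ‖w i‖ ≤ ∑ j, ‖B i j‖ * ‖h j‖ := by
      rw [hw]
      calc ‖∑ j, B i j * h j‖ ≤ ∑ j, ‖B i j * h j‖ := norm_sum_le _ _
        _ = ∑ j, ‖B i j‖ * ‖h j‖ := by simp [norm_mul]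
    have h2 : ‖w i‖^2 ≤ (∑ j, ‖B i j‖ * ‖h j‖)^2 :=
      pow_le_pow_left₀ (norm_nonneg _) h1 2
    refine h2.trans ?_
    calc (∑ j, ‖B i j‖ * ‖h j‖)^2 ≤ (∑ j, ‖B i j‖^2) * ∑ j, ‖h j‖^2 :=
          Finset.sum_mul_sq_le_sq_mul_sq _ _ _
      _ = (∑ j, ‖h j‖^2) * ∑ j, ‖B i j‖^2 := mul_comm _ _
  rw [hlhs, htr, Finset.mul_sum]
  exact Finset.sum_le_sum fun i _ => hbound i

lemma aux_trace_eq {M : ℕ} (h : Fin M → ℂ) (c : ℂ) (hc : c ≠ 0)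
    (hre : (starRingEnd ℂ) c = c) (hdot : star h ⬝ᵥ h = c^2) (P : ℝ) :
    (((P : ℂ) • vecMulVec (c⁻¹ • h) (star (c⁻¹ • h)) : Matrix (Fin M) (Fin M) ℂ)).trace
      = (P : ℂ) := by
  rw [Matrix.trace_smul, aux_trace_vmv, dotProduct_comm, star_smul, smul_dotProduct,
    dotProduct_smul, hdot]
  simp only [RCLike.star_def, map_inv₀, hre, smul_eq_mul]
  field_simp

lemma aux_quad_eq {M : ℕ} (h g : Fin M → ℂ) (c : ℂ) :
    star g ⬝ᵥ (((P : ℂ) • vecMulVec (c⁻¹ • h) (star (c⁻¹ • h))) *ᵥ g)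
      = (P : ℂ) * ((star (c⁻¹ • h) ⬝ᵥ g) * (star g ⬝ᵥ (c⁻¹ • h))) := by
  rw [Matrix.smul_mulVec, aux_vmv, dotProduct_smul, dotProduct_smul]
  simp [mul_assoc]

/-- If `Q̄ ≤ |gᴴĥ|²P`, MRC beamforming `S = P ĥ ĥᴴ` satisfies the power and energy
constraints and achieves the maximal rate `log(1 + ‖h‖²P)`. -/
theorem stmt5 {M : ℕ} (h g : EuclideanSpace ℂ (Fin M)) (hh : h ≠ 0) (hg : g ≠ 0)
    (P Qbar : ℝ) (hP : 0 < P) (hQ0 : 0 ≤ Qbar)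
    (hQ : Qbar ≤ Complex.normSq (star g ⬝ᵥ (((‖h‖ : ℂ))⁻¹ • h)) * P) :
    (((P : ℂ) • vecMulVec (((‖h‖ : ℂ))⁻¹ • h : Fin M → ℂ)
        (star (((‖h‖ : ℂ))⁻¹ • h : Fin M → ℂ)) : Matrix (Fin M) (Fin M) ℂ)).trace.re ≤ P ∧
    Qbar ≤ (star g ⬝ᵥ (((P : ℂ) • vecMulVec (((‖h‖ : ℂ))⁻¹ • h : Fin M → ℂ)
        (star (((‖h‖ : ℂ))⁻¹ • h : Fin M → ℂ))) *ᵥ g)).re ∧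
    Real.log (1 + (star h ⬝ᵥ (((P : ℂ) • vecMulVec (((‖h‖ : ℂ))⁻¹ • h : Fin M → ℂ)
        (star (((‖h‖ : ℂ))⁻¹ • h : Fin M → ℂ))) *ᵥ h)).re) =
      Real.log (1 + ‖h‖ ^ 2 * P) ∧
    ∀ S' : Matrix (Fin M) (Fin M) ℂ, S'.PosSemidef → S'.trace.re ≤ P →
      Real.log (1 + (star h ⬝ᵥ (S' *ᵥ h)).re) ≤ Real.log (1 + ‖h‖ ^ 2 * P) := by
  have hn : (0:ℝ) < ‖h‖ := norm_pos_iff.mpr hh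
  have hnc : ((‖h‖:ℝ) : ℂ) ≠ 0 := by exact_mod_cast hn.ne'
  have hsum : (∑ j, ‖h j‖^2 : ℝ) = ‖h‖^2 := by
    rw [EuclideanSpace.norm_eq, Real.sq_sqrt (by positivity)]
  have hdot : star (h : Fin M → ℂ) ⬝ᵥ (h : Fin M → ℂ) = ((‖h‖:ℂ))^2 := by
    rw [aux_dot_star_self, hsum]; norm_cast
  refine ⟨?_, ?_, ?_, ?_⟩
  · rw [aux_trace_eq (h : Fin M → ℂ) ((‖h‖:ℂ)) hnc (Complex.conj_ofReal _) hdot P,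
      Complex.ofReal_re]
  · rw [aux_quad_eq (P := P) (h : Fin M → ℂ) (g : Fin M → ℂ) ((‖h‖:ℂ)),
      aux_star_dot, mul_comm ((starRingEnd ℂ) _) _, Complex.mul_conj]
    have : ((P:ℂ) * (Complex.normSq (star (g : Fin M → ℂ) ⬝ᵥ ((‖h‖:ℂ))⁻¹ • (h : Fin M → ℂ)) : ℂ)).re
        = P * Complex.normSq (star (g : Fin M → ℂ) ⬝ᵥ ((‖h‖:ℂ))⁻¹ • (h : Fin M → ℂ)) := by
      norm_cast
    rw [this]
    calc Qbar ≤ _ * P := hQ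
      _ = _ := mul_comm _ _
  · rw [aux_quad_eq (P := P) (h : Fin M → ℂ) (h : Fin M → ℂ) ((‖h‖:ℂ))]
    have h1 : star (((‖h‖:ℂ))⁻¹ • (h : Fin M → ℂ)) ⬝ᵥ (h : Fin M → ℂ) = ((‖h‖:ℂ)) := by
      rw [star_smul, smul_dotProduct, hdot]
      simp only [RCLike.star_def, map_inv₀, Complex.conj_ofReal, smul_eq_mul]
      field_simp
    have h2 : star (h : Fin M → ℂ) ⬝ᵥ ((‖h‖:ℂ))⁻¹ • (h : Fin M → ℂ) = ((‖h‖:ℂ)) := by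
      rw [dotProduct_smul, hdot, smul_eq_mul]
      field_simp
    rw [h1, h2]
    have : ((P:ℂ) * ((‖h‖:ℂ) * (‖h‖:ℂ))).re = ‖h‖^2 * P := by
      norm_cast
      push_cast
      ring
    rw [this]
  · intro S' hS' htr
    have hpos : (0:ℝ) ≤ (star (h : Fin M → ℂ) ⬝ᵥ S' *ᵥ (h : Fin M → ℂ)).re :=
      hS'.re_dotProduct_nonneg _
    apply Real.log_le_log (by linarith)
    have hb := aux_quad_le_trace S' hS' (h : Fin M → ℂ)
    rw [hsum] at hb
    have hmul : ‖h‖^2 * S'.trace.re ≤ ‖h‖^2 * P :=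
      mul_le_mul_of_nonneg_left htr (by positivity)
    linarith
end

section
/- Let h, g ∈ ℂ^M be nonzero with ĥ = h/‖h‖, ĝ = g/‖g‖, α_gh = ĝᴴ h, and h_{g⊥} = h − (ĝᴴ h) ĝ assumed nonzero. For |gᴴĥ|²P < Q̄ ≤ P‖g‖², the unit vector v = √(Q̄/(P‖g‖²)) e^{i∠α_gh} ĝ + √(1 − Q̄/(P‖g‖²)) ĥ_{g⊥} satisfies ‖v‖ = 1, |gᴴ v|² P = Q̄, and |hᴴ v|² P = (√(Q̄/‖g‖²)·|α_gh| + √(P − Q̄/‖g‖²)·√(‖h‖² − |α_gh|²))². -/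
open Matrix

/-- Closed form of the optimal MISO beamformer when the energy constraint is active. -/
theorem stmt6 {M : ℕ} (h g hhat ghat hperp v : EuclideanSpace ℂ (Fin M)) (agh : ℂ)
    (hh : h ≠ 0) (hg : g ≠ 0)
    (hhhat : hhat = ((‖h‖ : ℂ))⁻¹ • h) (hghat : ghat = ((‖g‖ : ℂ))⁻¹ • g)
    (hagh : agh = star (ghat : Fin M → ℂ) ⬝ᵥ (h : Fin M → ℂ)) (hagh0 : agh ≠ 0)
    (hperp_def : hperp = h - (star (ghat : Fin M → ℂ) ⬝ᵥ (h : Fin M → ℂ)) • ghat)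
    (hperp0 : hperp ≠ 0)
    (P Qbar : ℝ) (hP : 0 < P)
    (hQlo : Complex.normSq (star (g : Fin M → ℂ) ⬝ᵥ (hhat : Fin M → ℂ)) * P < Qbar)
    (hQhi : Qbar ≤ P * ‖g‖ ^ 2)
    (hv : v = ((Real.sqrt (Qbar / (P * ‖g‖ ^ 2)) : ℂ) * (agh / (‖agh‖ : ℂ))) • ghat
        + (Real.sqrt (1 - Qbar / (P * ‖g‖ ^ 2)) : ℂ) • (((‖hperp‖ : ℂ))⁻¹ • hperp)) :
    ‖v‖ = 1 ∧
    Complex.normSq (star (g : Fin M → ℂ) ⬝ᵥ (v : Fin M → ℂ)) * P = Qbar ∧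
    Complex.normSq (star (h : Fin M → ℂ) ⬝ᵥ (v : Fin M → ℂ)) * P =
      (Real.sqrt (Qbar / ‖g‖ ^ 2) * ‖agh‖ +
        Real.sqrt (P - Qbar / ‖g‖ ^ 2) * Real.sqrt (‖h‖ ^ 2 - ‖agh‖ ^ 2)) ^ 2 := by
  classical
  have dg : ∀ x y : EuclideanSpace ℂ (Fin M),
      star (x : Fin M → ℂ) ⬝ᵥ (y : Fin M → ℂ) = (inner ℂ x y : ℂ) := fun x y => by
    rw [EuclideanSpace.inner_eq_star_dotProduct, dotProduct_comm]
  simp only [dg] at hagh hperp_def hQlo ⊢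
  have hng : (0:ℝ) < ‖g‖ := norm_pos_iff.mpr hg
  have hnp : (0:ℝ) < ‖hperp‖ := norm_pos_iff.mpr hperp0
  have hngC : ((‖g‖ : ℂ)) ≠ 0 := by exact_mod_cast hng.ne'
  have hnpC : ((‖hperp‖ : ℂ)) ≠ 0 := by exact_mod_cast hnp.ne'
  set t : ℝ := ‖agh‖ with ht
  have ht0 : 0 < t := by
    simpa [ht] using (norm_pos_iff.mpr hagh0)
  have htC : ((t : ℂ)) ≠ 0 := by exact_mod_cast ht0.ne'
  set ra : ℝ := Real.sqrt (Qbar / (P * ‖g‖ ^ 2)) with hra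
  set rb : ℝ := Real.sqrt (1 - Qbar / (P * ‖g‖ ^ 2)) with hrb
  have hQ0 : 0 < Qbar :=
    lt_of_le_of_lt (mul_nonneg (Complex.normSq_nonneg _) hP.le) hQlo
  have hPg : (0:ℝ) < P * ‖g‖ ^ 2 := by positivity
  have hfrac1 : Qbar / (P * ‖g‖ ^ 2) ≤ 1 := (div_le_one hPg).mpr hQhi
  have hfrac0 : 0 ≤ Qbar / (P * ‖g‖ ^ 2) := by positivity
  have ra2 : ra ^ 2 = Qbar / (P * ‖g‖ ^ 2) := Real.sq_sqrt hfrac0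
  have rb2 : rb ^ 2 = 1 - Qbar / (P * ‖g‖ ^ 2) := Real.sq_sqrt (by linarith)
  have ra0 : 0 ≤ ra := Real.sqrt_nonneg _
  have rb0 : 0 ≤ rb := Real.sqrt_nonneg _
  -- basic inner product facts
  have hgg : (inner ℂ g g : ℂ) = ((‖g‖:ℂ)) ^ 2 := inner_self_eq_norm_sq_to_K g
  have h1 : (inner ℂ g ghat : ℂ) = (‖g‖ : ℂ) := by
    rw [hghat, inner_smul_right, hgg, pow_two, inv_mul_cancel_left₀ hngC]
  have h2 : (inner ℂ ghat h : ℂ) = agh := hagh.symm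
  have hgh : (inner ℂ g h : ℂ) = (‖g‖ : ℂ) * agh := by
    have := hagh
    rw [hghat, inner_smul_left] at this
    rw [this]
    simp [Complex.conj_ofReal]
    field_simp
  have h3 : (inner ℂ g hperp : ℂ) = 0 := by
    rw [hperp_def, inner_sub_right, inner_smul_right, hgh, h1, ← hagh]; ring
  have h4 : (inner ℂ ghat hperp : ℂ) = 0 := by
    rw [hghat, inner_smul_left, h3, mul_zero]
  have h4' : (inner ℂ hperp ghat : ℂ) = 0 := by
    rw [← inner_conj_symm, h4, map_zero]
  have hdecomp : h = hperp + agh • ghat := by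
    rw [hperp_def, ← hagh]; abel
  have hpp : (inner ℂ hperp hperp : ℂ) = ((‖hperp‖:ℂ)) ^ 2 := inner_self_eq_norm_sq_to_K hperp
  have h6 : (inner ℂ h hperp : ℂ) = ((‖hperp‖:ℂ)) ^ 2 := by
    conv_lhs => rw [hdecomp]
    rw [inner_add_left, inner_smul_left, h4, hpp, mul_zero, add_zero]
  have h7 : (inner ℂ h ghat : ℂ) = (starRingEnd ℂ) agh := by
    rw [← inner_conj_symm, h2]
  have hghatnorm : ‖ghat‖ = 1 := by
    rw [hghat, norm_smul]
    simp [norm_inv, hng.ne']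
  have hunorm : ‖(((‖hperp‖ : ℂ))⁻¹ • hperp : EuclideanSpace ℂ (Fin M))‖ = 1 := by
    rw [norm_smul]
    simp [norm_inv, hnp.ne']
  -- norm of h decomposition (Pythagoras)
  have hperp_ghat_re : (RCLike.re (inner ℂ hperp (agh • ghat) : ℂ) : ℝ) = 0 := by
    rw [inner_smul_right, h4', mul_zero]
    simp
  have hpyth : ‖h‖ ^ 2 = ‖hperp‖ ^ 2 + t ^ 2 := by
    have := norm_add_sq (𝕜 := ℂ) hperp (agh • ghat)
    rw [← hdecomp] at this
    rw [this, hperp_ghat_re, norm_smul, hghatnorm]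
    simp only [ht, mul_one]
    ring
  -- inner g v
  have hgv : (inner ℂ g v : ℂ) = ((ra:ℂ) * (agh / (t:ℂ))) * (‖g‖:ℂ) := by
    rw [hv, inner_add_right, inner_smul_right, inner_smul_right, inner_smul_right, h3, h1]
    ring
  -- inner h v
  have hhv : (inner ℂ h v : ℂ) = ((ra * t + rb * ‖hperp‖ : ℝ) : ℂ) := by
    rw [hv, inner_add_right, inner_smul_right, inner_smul_right, inner_smul_right, h7, h6]
    have hmc : agh * (starRingEnd ℂ) agh = ((t:ℂ))^2 := by
      rw [Complex.mul_conj]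
      norm_cast
      rw [← Complex.sq_norm]
    push_cast
    field_simp
    linear_combination (ra:ℂ) * hmc
  -- unit modulus of phase factor
  have habsu : ‖agh / (t:ℂ)‖ = 1 := by
    rw [norm_div, Complex.norm_real, Real.norm_eq_abs, abs_of_pos ht0]
    exact div_self ht0.ne'
  have hmc : agh * (starRingEnd ℂ) agh = ((t:ℂ))^2 := by
    rw [Complex.mul_conj]
    norm_cast
    rw [← Complex.sq_norm]
  refine ⟨?_, ?_, ?_⟩
  · -- ‖v‖ = 1
    have hgg1 : (inner ℂ ghat ghat : ℂ) = 1 := by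
      rw [inner_self_eq_norm_sq_to_K, hghatnorm]; norm_num
    have hvv : (inner ℂ v v : ℂ) = ((ra ^ 2 + rb ^ 2 : ℝ) : ℂ) := by
      rw [hv]
      simp only [inner_add_left, inner_add_right, inner_smul_left, inner_smul_right,
        hgg1, h4, h4', hpp, _root_.map_mul, map_div₀, map_inv₀, Complex.conj_ofReal,
        mul_zero, zero_mul, mul_one, add_zero, zero_add]
      push_cast
      field_simp
      linear_combination ((ra:ℂ))^2 * hmc
    have hvn : ‖v‖ ^ 2 = ra ^ 2 + rb ^ 2 := by
      have h' := inner_self_eq_norm_sq_to_K (𝕜 := ℂ) v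
      rw [hvv] at h'
      have h2' : (ra ^ 2 + rb ^ 2 : ℝ) = ‖v‖ ^ 2 := by
        simpa [← Complex.ofReal_pow] using congrArg Complex.re h'
      linarith [h2']
    have hv2 : ‖v‖ ^ 2 = 1 := by rw [hvn, ra2, rb2]; ring
    calc ‖v‖ = Real.sqrt (‖v‖ ^ 2) := (Real.sqrt_sq (norm_nonneg v)).symm
    _ = 1 := by rw [hv2]; exact Real.sqrt_one
  · -- energy constraint
    have habs : ‖(ra:ℂ) * (agh / (t:ℂ)) * (‖g‖:ℂ)‖ = ra * ‖g‖ := by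
      rw [norm_mul, norm_mul, habsu, Complex.norm_real, Complex.norm_real, Real.norm_eq_abs,
        Real.norm_eq_abs,
        abs_of_nonneg ra0, abs_of_nonneg hng.le]
      ring
    rw [hgv, Complex.normSq_eq_norm_sq, habs]
    have : (ra * ‖g‖) ^ 2 = ra ^ 2 * ‖g‖ ^ 2 := by ring
    rw [this, ra2]
    field_simp
  · -- rate value
    have hsq1 : Real.sqrt (Qbar / ‖g‖ ^ 2) = Real.sqrt P * ra := by
      rw [hra, ← Real.sqrt_mul hP.le]
      congr 1
      field_simp
    have hsq2 : Real.sqrt (P - Qbar / ‖g‖ ^ 2) = Real.sqrt P * rb := by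
      rw [hrb, ← Real.sqrt_mul hP.le]
      congr 1
      field_simp
    have hsq3 : Real.sqrt (‖h‖ ^ 2 - t ^ 2) = ‖hperp‖ := by
      rw [hpyth]
      have : ‖hperp‖ ^ 2 + t ^ 2 - t ^ 2 = ‖hperp‖ ^ 2 := by ring
      rw [this, Real.sqrt_sq hnp.le]
    have hps : Real.sqrt P ^ 2 = P := Real.sq_sqrt hP.le
    rw [hhv, hsq1, hsq2, hsq3]
    rw [Complex.normSq_ofReal]
    linear_combination (-((ra * t + rb * ‖hperp‖) ^ 2)) * hps
end

section
/- Suppose μ, λ ≥ 0 and μ ≤ λ g₁, where g₁ = λ_max(GᴴG) > 0, and suppose v₁ is a unit eigenvector of GᴴG for eigenvalue g₁ with ‖H v₁‖² > 0. Then the supremum over PSD matrices S of log det(I + H S Hᴴ) − tr((μ I − λ GᴴG) S) is +∞. -/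
open Matrix ComplexOrder

private lemma conj_mul_self (z : ℂ) : (starRingEnd ℂ) z * z = (Complex.normSq z : ℂ) := by
  rw [mul_comm, Complex.mul_conj]

/-- If `μ ≤ λ g₁`, the Lagrangian `log det(I + H S Hᴴ) − tr((μI − λGᴴG)S)` is
unbounded above over PSD `S`. -/
theorem stmt8 {M N K : ℕ} (H : Matrix (Fin N) (Fin M) ℂ) (G : Matrix (Fin K) (Fin M) ℂ)
    (μ lam g1 : ℝ) (hμ : 0 ≤ μ) (hlam : 0 ≤ lam) (hle : μ ≤ lam * g1) (hg1 : 0 < g1)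
    (v1 : Fin M → ℂ) (hunit : ∑ i, Complex.normSq (v1 i) = 1)
    (heig : (Gᴴ * G) *ᵥ v1 = (g1 : ℂ) • v1)
    (hmax : ∀ (w : Fin M → ℂ) (c : ℝ), (Gᴴ * G) *ᵥ w = (c : ℂ) • w → w ≠ 0 → c ≤ g1)
    (hHv : 0 < ∑ i, Complex.normSq ((H *ᵥ v1) i)) :
    ∀ C : ℝ, ∃ S : Matrix (Fin M) (Fin M) ℂ, S.PosSemidef ∧
      C < Real.log ((1 + H * S * Hᴴ).det.re) -
        ((((μ : ℂ) • (1 : Matrix (Fin M) (Fin M) ℂ) - (lam : ℂ) • (Gᴴ * G)) * S)).trace.re := by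
  intro C
  set a : ℝ := ∑ i, Complex.normSq ((H *ᵥ v1) i) with ha
  set β : ℝ := Real.exp C / a with hβdef
  have hβ : 0 ≤ β := div_nonneg (Real.exp_pos C).le hHv.le
  set c : ℝ := Real.sqrt β with hc
  have hc2 : (c : ℝ) * c = β := Real.mul_self_sqrt hβ
  set w : Fin M → ℂ := (c : ℂ) • v1 with hw
  set S : Matrix (Fin M) (Fin M) ℂ := replicateCol Unit w * replicateRow Unit (star w) with hS
  have hScol : S = replicateCol Unit w * (replicateCol Unit w)ᴴ := by rw [conjTranspose_replicateCol]
  refine ⟨S, hScol ▸ posSemidef_self_mul_conjTranspose _, ?_⟩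
  -- compute H * S * Hᴴ
  set u : Fin N → ℂ := H *ᵥ w with hu
  have hHSH : H * S * Hᴴ = replicateCol Unit u * replicateRow Unit (star u) := by
    rw [hS, ← Matrix.mul_assoc, ← replicateCol_mulVec, Matrix.mul_assoc, ← conjTranspose_replicateCol,
      ← conjTranspose_mul, ← replicateCol_mulVec, conjTranspose_replicateCol]
  -- determinant
  have hdot : star u ⬝ᵥ u = ((β * a : ℝ) : ℂ) := by
    have hun : u = (c : ℂ) • (H *ᵥ v1) := by rw [hu, hw, mulVec_smul]
    simp only [hun, dotProduct, Pi.star_apply, Pi.smul_apply, smul_eq_mul, star_mul',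
      Complex.star_def]
    calc ∑ x, (starRingEnd ℂ) (c : ℂ) * (starRingEnd ℂ) ((H *ᵥ v1) x) * ((c : ℂ) * (H *ᵥ v1) x)
        = ∑ x, ((c : ℂ) * c) * (Complex.normSq ((H *ᵥ v1) x) : ℂ) := by
          refine Finset.sum_congr rfl fun x _ => ?_
          rw [← conj_mul_self, Complex.conj_ofReal]; ring
      _ = ((β * a : ℝ) : ℂ) := by
          rw [← Finset.mul_sum]; norm_cast
          rw [hc2]
  have hdet : (1 + H * S * Hᴴ).det = ((1 + β * a : ℝ) : ℂ) := by
    rw [hHSH, det_one_add_replicateCol_mul_replicateRow, hdot]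
    push_cast; ring
  -- trace
  have hww : star w ⬝ᵥ w = ((β : ℝ) : ℂ) := by
    simp only [hw, dotProduct, Pi.star_apply, Pi.smul_apply, smul_eq_mul, star_mul',
      Complex.star_def]
    calc ∑ x, (starRingEnd ℂ) (c : ℂ) * (starRingEnd ℂ) (v1 x) * ((c : ℂ) * v1 x)
        = ∑ x, ((c : ℂ) * c) * (Complex.normSq (v1 x) : ℂ) := by
          refine Finset.sum_congr rfl fun x _ => ?_
          rw [← conj_mul_self, Complex.conj_ofReal]; ring
      _ = ((β : ℝ) : ℂ) := by
          rw [← Finset.mul_sum]; norm_cast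
          rw [hc2, hunit, mul_one]
  have hAv : (((μ : ℂ) • (1 : Matrix (Fin M) (Fin M) ℂ) - (lam : ℂ) • (Gᴴ * G))) *ᵥ w
      = ((μ - lam * g1 : ℝ) : ℂ) • w := by
    rw [hw, mulVec_smul, sub_mulVec, smul_mulVec, one_mulVec, smul_mulVec, heig]
    funext i
    simp only [Pi.smul_apply, Pi.sub_apply, smul_eq_mul]
    push_cast
    ring
  have htr : ((((μ : ℂ) • (1 : Matrix (Fin M) (Fin M) ℂ) - (lam : ℂ) • (Gᴴ * G)) * S)).trace
      = ((β * (μ - lam * g1) : ℝ) : ℂ) := by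
    rw [hS, ← Matrix.mul_assoc, ← replicateCol_mulVec, trace_replicateCol_mul_replicateRow, dotProduct_comm, hAv,
      dotProduct_smul, hww, smul_eq_mul]
    push_cast; ring
  rw [hdet, htr, Complex.ofReal_re, Complex.ofReal_re]
  have hba : β * a = Real.exp C := by
    rw [hβdef]; field_simp
  have h1 : C < Real.log (1 + β * a) := by
    rw [hba]
    calc C = Real.log (Real.exp C) := (Real.log_exp C).symm
      _ < Real.log (1 + Real.exp C) := by
          apply Real.log_lt_log (Real.exp_pos C); linarith
  have h2 : β * (μ - lam * g1) ≤ 0 :=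
    mul_nonpos_of_nonneg_of_nonpos hβ (by linarith)
  linarith
end

section
/- Let h ∈ ℂ^M be nonzero and A Hermitian positive definite, and set S* = c · A^{-1}h hᴴA^{-1} with c = (1/‖A^{-1/2}h‖² − 1/‖A^{-1/2}h‖⁴)⁺. Then log(1 + hᴴ S* h) = (2 log ‖A^{-1/2}h‖)⁺, where (x)⁺ = max(x, 0). -/
open Matrix ComplexOrder

/-- The positive square root of a positive semidefinite matrix (removed from Mathlib;
restated with its former definition). -/
noncomputable def Matrix.PosSemidef.sqrt {n 𝕜 : Type*} [Fintype n] [DecidableEq n] [RCLike 𝕜]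
    {A : Matrix n n 𝕜} (hA : A.PosSemidef) : Matrix n n 𝕜 :=
  (hA.1.eigenvectorUnitary : Matrix n n 𝕜) * diagonal ((↑) ∘ (√·) ∘ hA.1.eigenvalues) *
    (star hA.1.eigenvectorUnitary : Matrix n n 𝕜)

lemma dot_vecMulVec {M : ℕ} (h u v : Fin M → ℂ) :
    star h ⬝ᵥ (vecMulVec u v *ᵥ h) = (star h ⬝ᵥ u) * (v ⬝ᵥ h) := by
  simp only [dotProduct, mulVec, vecMulVec_apply, Finset.mul_sum, Finset.sum_mul]
  rw [Finset.sum_comm]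
  exact Finset.sum_congr rfl fun i _ => Finset.sum_congr rfl fun j _ => by ring

/-- The optimal rank-one MISO covariance achieves rate `(2 log‖A^{-1/2}h‖)⁺`. -/
theorem stmt11 {M : ℕ} (h : Fin M → ℂ) (hh : h ≠ 0)
    (A : Matrix (Fin M) (Fin M) ℂ) (hA : A.PosDef) :
    Real.log (1 + (star h ⬝ᵥ
      ((((max (1 / (∑ i, Complex.normSq (((hA.posSemidef.sqrt)⁻¹ *ᵥ h) i)) -
          1 / (∑ i, Complex.normSq (((hA.posSemidef.sqrt)⁻¹ *ᵥ h) i)) ^ 2) 0 : ℝ) : ℂ) •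
        vecMulVec (A⁻¹ *ᵥ h) (star (A⁻¹ *ᵥ h))) *ᵥ h)).re) =
      max (Real.log (∑ i, Complex.normSq (((hA.posSemidef.sqrt)⁻¹ *ᵥ h) i))) 0 := by
  set S := hA.posSemidef.sqrt with hSdef
  set g := S⁻¹ *ᵥ h with hgdef
  set n : ℝ := ∑ i, Complex.normSq (g i) with hndef
  set u := A⁻¹ *ᵥ h with hudef
  set c : ℝ := max (1 / n - 1 / n ^ 2) 0 with hcdef
  have hSps : S.PosSemidef := by
    rw [hSdef, Matrix.PosSemidef.sqrt]
    exact (posSemidef_diagonal_iff.mpr fun i => Complex.zero_le_real.mpr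
      (Real.sqrt_nonneg _)).mul_mul_conjTranspose_same _
  have hSH : Sᴴ = S := hSps.isHermitian
  have hSS : S * S = A := by
    rw [hSdef, Matrix.PosSemidef.sqrt]
    conv_rhs => rw [hA.posSemidef.1.spectral_theorem, Unitary.conjStarAlgAut_apply]
    have hU := (hA.posSemidef.1.eigenvectorUnitary).2.1
    calc _ = (hA.posSemidef.1.eigenvectorUnitary : Matrix (Fin M) (Fin M) ℂ) *
          diagonal ((↑) ∘ (√·) ∘ hA.posSemidef.1.eigenvalues) *
          (star (hA.posSemidef.1.eigenvectorUnitary : Matrix (Fin M) (Fin M) ℂ) *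
            (hA.posSemidef.1.eigenvectorUnitary : Matrix (Fin M) (Fin M) ℂ)) *
          diagonal ((↑) ∘ (√·) ∘ hA.posSemidef.1.eigenvalues) *
          (star hA.posSemidef.1.eigenvectorUnitary : Matrix (Fin M) (Fin M) ℂ) := by
            simp only [Matrix.mul_assoc]; rfl
      _ = _ := by
        rw [hU, Matrix.mul_one, Matrix.mul_assoc (_ : Matrix (Fin M) (Fin M) ℂ) (diagonal _) (diagonal _), diagonal_mul_diagonal]
        congr 3
        funext i
        simp only [Function.comp_apply]
        rw [← Complex.ofReal_mul, Real.mul_self_sqrt (hA.posSemidef.eigenvalues_nonneg i)]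
        rfl
  have hSunit : IsUnit S := by
    rw [Matrix.isUnit_iff_isUnit_det]
    have hd : S.det * S.det = A.det := by rw [← Matrix.det_mul, hSS]
    have hAdet : IsUnit A.det := hA.det_pos.ne'.isUnit
    rw [← hd] at hAdet
    exact isUnit_of_mul_isUnit_left hAdet
  have hSinvH : (S⁻¹)ᴴ = S⁻¹ := by rw [Matrix.conjTranspose_nonsing_inv, hSH]
  have hAinv : A⁻¹ = S⁻¹ * S⁻¹ := by rw [← hSS, Matrix.mul_inv_rev]
  -- g ≠ 0, so n > 0
  have hg0 : g ≠ 0 := by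
    intro hgz
    apply hh
    have := congrArg (fun v => S *ᵥ v) hgz
    simpa [hgdef, Matrix.mulVec_mulVec, Matrix.mul_nonsing_inv _
      ((Matrix.isUnit_iff_isUnit_det S).mp hSunit)] using this
  have hnpos : 0 < n := by
    obtain ⟨i, hi⟩ := Function.ne_iff.mp hg0
    exact Finset.sum_pos' (fun j _ => Complex.normSq_nonneg _)
      ⟨i, Finset.mem_univ i, by simpa [Complex.normSq_pos] using hi⟩
  -- star h ⬝ᵥ u = n
  have hstarg : star g = star h ᵥ* S⁻¹ := by
    rw [hgdef, Matrix.star_mulVec, hSinvH]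
  have hn : star h ⬝ᵥ u = (n : ℂ) := by
    rw [hudef, hAinv, ← Matrix.mulVec_mulVec, Matrix.dotProduct_mulVec, ← hstarg, ← hgdef]
    simp [dotProduct, hndef, ← Complex.normSq_eq_conj_mul_self]
  have hn2 : star u ⬝ᵥ h = (n : ℂ) := by
    have : star u ⬝ᵥ h = star (star h ⬝ᵥ u) := by
      simp [dotProduct, Finset.sum_comm, mul_comm]
    rw [this, hn]
    simp
  -- compute the quadratic form
  have hquad : star h ⬝ᵥ ((((c : ℝ) : ℂ) • vecMulVec u (star u)) *ᵥ h) = ((c * n * n : ℝ) : ℂ) := by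
    rw [Matrix.smul_mulVec, dotProduct_smul, dot_vecMulVec, hn, hn2, smul_eq_mul]
    push_cast
    ring
  rw [hquad]
  have hre : ((c * n * n : ℝ) : ℂ).re = c * n * n := Complex.ofReal_re _
  rw [hre]
  rcases le_or_gt 1 n with h1 | h1
  · -- n ≥ 1
    have hc : c = 1 / n - 1 / n ^ 2 := by
      rw [hcdef]
      apply max_eq_left
      have : 1 / n ^ 2 ≤ 1 / n := by
        apply one_div_le_one_div_of_le hnpos
        nlinarith
      linarith
    have : 1 + c * n * n = n := by
      rw [hc]
      field_simp
      ring
    rw [this, max_eq_left (Real.log_nonneg h1)]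
  · -- n < 1
    have hc : c = 0 := by
      rw [hcdef]
      apply max_eq_right
      have : 1 / n < 1 / n ^ 2 := by
        apply one_div_lt_one_div_of_lt (by positivity)
        nlinarith
      linarith
    rw [hc]
    simp [max_eq_right (Real.log_nonpos hnpos.le h1.le)]
end

section
/- For a SIMO channel h ∈ ℂ^N and power P > 0, for any splitting ratios ρ_i ∈ [0,1], the harvested power Q = P·Σᵢ ρᵢ|hᵢ|² and the achievable MRC rate R = log(1 + Σᵢ(1−ρᵢ)|hᵢ|² P) satisfy R = log(1 + ‖h‖²P − Q). Consequently, the set of achievable (R,Q) pairs under arbitrary power splitting equals { (R,Q) : 0 ≤ Q ≤ ‖h‖²P, R ≤ log(1 + ‖h‖²P − Q) }, and this region is already achieved by uniform splitting ρ_i = ρ for all i. -/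
/-- SIMO power splitting: rate-energy identity and equality of the power-splitting,
uniform-power-splitting, and ideal rate-energy regions. -/
theorem stmt14 {N : ℕ} (h : Fin N → ℂ) (P : ℝ) (hP : 0 < P) :
    (∀ ρ : Fin N → ℝ, (∀ i, ρ i ∈ Set.Icc (0 : ℝ) 1) →
      Real.log (1 + ∑ i, (1 - ρ i) * Complex.normSq (h i) * P) =
        Real.log (1 + (∑ i, Complex.normSq (h i)) * P -
          P * ∑ i, ρ i * Complex.normSq (h i))) ∧
    {p : ℝ × ℝ | ∃ ρ : Fin N → ℝ, (∀ i, ρ i ∈ Set.Icc (0 : ℝ) 1) ∧ 0 ≤ p.2 ∧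
        p.2 ≤ P * ∑ i, ρ i * Complex.normSq (h i) ∧
        p.1 ≤ Real.log (1 + ∑ i, (1 - ρ i) * Complex.normSq (h i) * P)} =
      {p : ℝ × ℝ | 0 ≤ p.2 ∧ p.2 ≤ (∑ i, Complex.normSq (h i)) * P ∧
        p.1 ≤ Real.log (1 + (∑ i, Complex.normSq (h i)) * P - p.2)} ∧
    {p : ℝ × ℝ | ∃ ρ : ℝ, ρ ∈ Set.Icc (0 : ℝ) 1 ∧ 0 ≤ p.2 ∧
        p.2 ≤ P * ∑ i, ρ * Complex.normSq (h i) ∧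
        p.1 ≤ Real.log (1 + ∑ i, (1 - ρ) * Complex.normSq (h i) * P)} =
      {p : ℝ × ℝ | 0 ≤ p.2 ∧ p.2 ≤ (∑ i, Complex.normSq (h i)) * P ∧
        p.1 ≤ Real.log (1 + (∑ i, Complex.normSq (h i)) * P - p.2)} := by
  have hS0 : 0 ≤ ∑ i, Complex.normSq (h i) :=
    Finset.sum_nonneg fun i _ => Complex.normSq_nonneg _
  have key : ∀ ρ : Fin N → ℝ, ∑ i, (1 - ρ i) * Complex.normSq (h i) * P =
      (∑ i, Complex.normSq (h i)) * P - P * ∑ i, ρ i * Complex.normSq (h i) := by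
    intro ρ
    rw [Finset.sum_mul, Finset.mul_sum, ← Finset.sum_sub_distrib]
    exact Finset.sum_congr rfl fun i _ => by ring
  have part1 : ∀ ρ : Fin N → ℝ, (∀ i, ρ i ∈ Set.Icc (0 : ℝ) 1) →
      Real.log (1 + ∑ i, (1 - ρ i) * Complex.normSq (h i) * P) =
        Real.log (1 + (∑ i, Complex.normSq (h i)) * P -
          P * ∑ i, ρ i * Complex.normSq (h i)) := by
    intro ρ _
    rw [key ρ, ← add_sub_assoc]
  -- forward inclusion: function-split region ⊆ ideal region
  have hAC : ∀ p : ℝ × ℝ, (∃ ρ : Fin N → ℝ, (∀ i, ρ i ∈ Set.Icc (0 : ℝ) 1) ∧ 0 ≤ p.2 ∧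
        p.2 ≤ P * ∑ i, ρ i * Complex.normSq (h i) ∧
        p.1 ≤ Real.log (1 + ∑ i, (1 - ρ i) * Complex.normSq (h i) * P)) →
      (0 ≤ p.2 ∧ p.2 ≤ (∑ i, Complex.normSq (h i)) * P ∧
        p.1 ≤ Real.log (1 + (∑ i, Complex.normSq (h i)) * P - p.2)) := by
    rintro ⟨R, Q⟩ ⟨ρ, hρ, hQ0, hQle, hRle⟩
    have hT0 : 0 ≤ ∑ i, ρ i * Complex.normSq (h i) :=
      Finset.sum_nonneg fun i _ => mul_nonneg (hρ i).1 (Complex.normSq_nonneg _)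
    have hTle : ∑ i, ρ i * Complex.normSq (h i) ≤ ∑ i, Complex.normSq (h i) :=
      Finset.sum_le_sum fun i _ =>
        mul_le_of_le_one_left (Complex.normSq_nonneg _) (hρ i).2
    refine ⟨hQ0, ?_, ?_⟩
    · calc Q ≤ P * ∑ i, ρ i * Complex.normSq (h i) := hQle
        _ ≤ P * ∑ i, Complex.normSq (h i) := by nlinarith
        _ = (∑ i, Complex.normSq (h i)) * P := mul_comm _ _
    · refine hRle.trans ?_
      rw [key ρ, ← add_sub_assoc]
      apply Real.log_le_log
      · nlinarith
      · nlinarith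
  -- ideal region ⊆ uniform-split region
  have hCB : ∀ p : ℝ × ℝ, (0 ≤ p.2 ∧ p.2 ≤ (∑ i, Complex.normSq (h i)) * P ∧
        p.1 ≤ Real.log (1 + (∑ i, Complex.normSq (h i)) * P - p.2)) →
      (∃ ρ : ℝ, ρ ∈ Set.Icc (0 : ℝ) 1 ∧ 0 ≤ p.2 ∧
        p.2 ≤ P * ∑ i, ρ * Complex.normSq (h i) ∧
        p.1 ≤ Real.log (1 + ∑ i, (1 - ρ) * Complex.normSq (h i) * P)) := by
    rintro ⟨R, Q⟩ ⟨hQ0, hQS, hR⟩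
    set S := ∑ i, Complex.normSq (h i) with hSdef
    by_cases hSP : S * P = 0
    · refine ⟨0, ⟨le_refl _, zero_le_one⟩, hQ0, ?_, ?_⟩
      · have hQ : Q = 0 := le_antisymm (hSP ▸ hQS) hQ0
        simp only [zero_mul] at *
        rw [hQ]
        have : P * ∑ i, (0:ℝ) * Complex.normSq (h i) = 0 := by simp
        simp [this]
      · have hsum : ∑ i, (1 - (0:ℝ)) * Complex.normSq (h i) * P = S * P - Q := by
          rw [key (fun _ => 0)]
          have hQ : Q = 0 := le_antisymm (hSP ▸ hQS) hQ0
          simp [hQ, hSdef]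
        rw [hsum, ← add_sub_assoc]
        exact hR
    · have hSPpos : 0 < S * P := lt_of_le_of_ne (mul_nonneg hS0 hP.le) (Ne.symm hSP)
      refine ⟨Q / (S * P), ⟨div_nonneg hQ0 hSPpos.le, (div_le_one hSPpos).2 hQS⟩, hQ0, ?_, ?_⟩
      · have : P * ∑ i, Q / (S * P) * Complex.normSq (h i) = Q := by
          rw [← Finset.mul_sum, ← hSdef]
          have hSne : S ≠ 0 := fun h0 => hSP (by rw [h0, zero_mul])
          field_simp
        rw [this]
      · have hsum : ∑ i, (1 - Q / (S * P)) * Complex.normSq (h i) * P = S * P - Q := by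
          rw [key (fun _ => Q / (S * P))]
          rw [← Finset.mul_sum, ← hSdef]
          have hSne : S ≠ 0 := fun h0 => hSP (by rw [h0, zero_mul])
          field_simp
        rw [hsum, ← add_sub_assoc]
        exact hR
  -- uniform-split region ⊆ function-split region
  have hBA : ∀ p : ℝ × ℝ, (∃ ρ : ℝ, ρ ∈ Set.Icc (0 : ℝ) 1 ∧ 0 ≤ p.2 ∧
        p.2 ≤ P * ∑ i, ρ * Complex.normSq (h i) ∧
        p.1 ≤ Real.log (1 + ∑ i, (1 - ρ) * Complex.normSq (h i) * P)) →
      (∃ ρ : Fin N → ℝ, (∀ i, ρ i ∈ Set.Icc (0 : ℝ) 1) ∧ 0 ≤ p.2 ∧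
        p.2 ≤ P * ∑ i, ρ i * Complex.normSq (h i) ∧
        p.1 ≤ Real.log (1 + ∑ i, (1 - ρ i) * Complex.normSq (h i) * P)) := by
    rintro p ⟨ρ, hρ, h1, h2, h3⟩
    exact ⟨fun _ => ρ, fun _ => hρ, h1, h2, h3⟩
  refine ⟨part1, ?_, ?_⟩
  · ext p
    exact ⟨hAC p, fun hp => hBA p (hCB p hp)⟩
  · ext p
    exact ⟨fun hp => hAC p (hBA p hp), hCB p⟩
end

section
/- In the SISO power-splitting scheme with no antenna noise (σ_A²=0, σ_P²=1), channel gain h > 0 and power P > 0, the achievable rate-energy region ⋃_{ρ∈[0,1]} {(R,Q): R ≤ log(1+(1−ρ)Ph), Q ≤ ρPh} equals the region {(R,Q): 0 ≤ Q ≤ Ph, R ≤ log(1 + Ph − Q)} achieved by the time-switching scheme with flexible power constraint. -/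
/-- In the SISO case with no antenna noise, the power-splitting rate-energy region
equals the flexible time-switching region. -/
theorem stmt16 (hgain P : ℝ) (hh : 0 < hgain) (hP : 0 < P) :
    {p : ℝ × ℝ | ∃ ρ : ℝ, 0 ≤ ρ ∧ ρ ≤ 1 ∧
        p.1 ≤ Real.log (1 + (1 - ρ) * P * hgain) ∧ 0 ≤ p.2 ∧ p.2 ≤ ρ * P * hgain} =
      {p : ℝ × ℝ | 0 ≤ p.2 ∧ p.2 ≤ P * hgain ∧
        p.1 ≤ Real.log (1 + P * hgain - p.2)} := by
  have hPh : 0 < P * hgain := mul_pos hP hh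
  ext p
  simp only [Set.mem_setOf_eq]
  constructor
  · rintro ⟨ρ, h0, h1, hR, hQ0, hQ⟩
    refine ⟨hQ0, hQ.trans ?_, ?_⟩
    · nlinarith
    · refine hR.trans (Real.log_le_log ?_ ?_)
      · nlinarith
      · nlinarith
  · rintro ⟨hQ0, hQ, hR⟩
    refine ⟨p.2 / (P * hgain), div_nonneg hQ0 hPh.le, ?_, ?_, hQ0, ?_⟩
    · rw [div_le_one hPh]; exact hQ
    · have : 1 + (1 - p.2 / (P * hgain)) * P * hgain = 1 + P * hgain - p.2 := by
        field_simp; ring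
      rw [this]; exact hR
    · have : p.2 / (P * hgain) * P * hgain = p.2 := by field_simp
      exact le_of_eq this.symm
end

section
/- In the time-switching scheme with flexible power constraint, for any fixed harvested power Q with 0 ≤ Q ≤ h₁P, the minimum average transmit energy needed in the energy-harvesting slot of duration fraction α ∈ (0,1] to harvest Q is Q/h₁, independent of α; consequently the achievable information rate (1−α)·log det(I + H S₁ Hᴴ) subject to (1−α)·tr(S₁) ≤ P − Q/h₁ is maximized in the limit α → 0, and the supremum of achievable rates equals max{ log det(I + H S Hᴴ) : tr(S) ≤ P − Q/h₁, S ⪰ 0 }. -/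
open Matrix ComplexOrder

section Stmt17Aux

lemma aux_det_one_add_smul {n : ℕ} {A : Matrix (Fin n) (Fin n) ℂ} (hA : A.IsHermitian) (c : ℝ) :
    ((1 : Matrix (Fin n) (Fin n) ℂ) + (c : ℂ) • A).det
      = ((∏ i, (1 + c * hA.eigenvalues i) : ℝ) : ℂ) := by
  set U : Matrix (Fin n) (Fin n) ℂ := (hA.eigenvectorUnitary : Matrix (Fin n) (Fin n) ℂ) with hU
  have hUs : U * star U = 1 := mem_unitaryGroup_iff.mp (hA.eigenvectorUnitary).2
  have key : (1 : Matrix (Fin n) (Fin n) ℂ) + (c : ℂ) • A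
      = U * diagonal (fun i => 1 + (c : ℂ) * (hA.eigenvalues i : ℂ)) * star U := by
    have hd : diagonal (fun i => 1 + (c : ℂ) * (hA.eigenvalues i : ℂ))
        = 1 + (c : ℂ) • diagonal ((RCLike.ofReal : ℝ → ℂ) ∘ hA.eigenvalues) := by
      ext i j
      by_cases h : i = j <;>
        simp [h, diagonal, Matrix.one_apply, Function.comp]
    rw [hd, Matrix.mul_add, Matrix.add_mul, Matrix.mul_one, hUs, Matrix.mul_smul,
      Matrix.smul_mul]
    conv_lhs => rw [hA.spectral_theorem]
    rfl
  rw [key, det_mul_right_comm, hUs, Matrix.one_mul, det_diagonal]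
  push_cast
  ring_nf

lemma aux_trace_eq_sum {n : ℕ} {A : Matrix (Fin n) (Fin n) ℂ} (hA : A.IsHermitian) :
    A.trace = ((∑ i, hA.eigenvalues i : ℝ) : ℂ) := by
  set U : Matrix (Fin n) (Fin n) ℂ := (hA.eigenvectorUnitary : Matrix (Fin n) (Fin n) ℂ) with hU
  have hUs : star U * U = 1 := mem_unitaryGroup_iff'.mp (hA.eigenvectorUnitary).2
  conv_lhs => rw [hA.spectral_theorem, Unitary.conjStarAlgAut_apply]
  rw [trace_mul_cycle, ← hU, hUs, Matrix.one_mul, trace_diagonal]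
  push_cast
  rfl

lemma aux_bern {l b : ℝ} (hl : 0 ≤ l) (hb0 : 0 ≤ b) (hb1 : b ≤ 1) :
    b * Real.log (1 + l) ≤ Real.log (1 + b * l) := by
  have h1 : (0:ℝ) < 1 + l := by linarith
  have h2 : (1 + l) ^ b ≤ 1 + b * l :=
    rpow_one_add_le_one_add_mul_self (by linarith) hb0 hb1
  have h3 : (0:ℝ) < (1 + l) ^ b := Real.rpow_pos_of_pos h1 b
  calc b * Real.log (1 + l) = Real.log ((1 + l) ^ b) := (Real.log_rpow h1 b).symm
    _ ≤ Real.log (1 + b * l) := Real.log_le_log h3 h2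

lemma aux_cs {m k : ℕ} (B : Matrix (Fin m) (Fin k) ℂ) (x : Fin k → ℂ) (i : Fin m) :
    Complex.normSq (∑ j, B i j * x j) ≤ (∑ j, Complex.normSq (B i j)) * (∑ j, Complex.normSq (x j)) := by
  have h1 : ‖∑ j, B i j * x j‖ ≤ ∑ j, ‖B i j‖ * ‖x j‖ := by
    refine (norm_sum_le _ _).trans_eq ?_
    simp [_root_.map_mul]
  have h2 : (∑ j, ‖B i j‖ * ‖x j‖) ^ 2
      ≤ (∑ j, ‖B i j‖ ^ 2) * (∑ j, ‖x j‖ ^ 2) :=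
    Finset.sum_mul_sq_le_sq_mul_sq _ _ _
  calc Complex.normSq (∑ j, B i j * x j) = ‖∑ j, B i j * x j‖ ^ 2 := by
        rw [Complex.sq_norm]
    _ ≤ (∑ j, ‖B i j‖ * ‖x j‖) ^ 2 := by
        exact pow_le_pow_left₀ (norm_nonneg _) h1 2
    _ ≤ (∑ j, ‖B i j‖ ^ 2) * (∑ j, ‖x j‖ ^ 2) := h2
    _ = (∑ j, Complex.normSq (B i j)) * (∑ j, Complex.normSq (x j)) := by
        simp [Complex.sq_norm]

lemma aux_trace_CtC {m k : ℕ} (C : Matrix (Fin m) (Fin k) ℂ) :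
    (Cᴴ * C).trace.re = ∑ j, ∑ i, Complex.normSq (C i j) := by
  rw [trace, Complex.re_sum]
  refine Finset.sum_congr rfl fun j _ => ?_
  rw [diag_apply, Matrix.mul_apply, Complex.re_sum]
  refine Finset.sum_congr rfl fun i _ => ?_
  simp [conjTranspose_apply, Complex.normSq_apply, Complex.mul_re]

lemma aux_trace_bound {m k : ℕ} (A : Matrix (Fin k) (Fin m) ℂ) {S : Matrix (Fin m) (Fin m) ℂ}
    (hS : S.PosSemidef) :
    (A * S * Aᴴ).trace.re ≤ (∑ i, ∑ j, Complex.normSq (A i j)) * S.trace.re := by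
  obtain ⟨B, rfl⟩ : ∃ B : Matrix (Fin m) (Fin m) ℂ, S = Bᴴ * B := by
    open scoped MatrixOrder in
    obtain ⟨B, hB⟩ := CStarAlgebra.nonneg_iff_eq_star_mul_self.mp hS.nonneg
    exact ⟨B, hB⟩
  have h1 : A * (Bᴴ * B) * Aᴴ = (B * Aᴴ)ᴴ * (B * Aᴴ) := by
    rw [conjTranspose_mul, conjTranspose_conjTranspose, Matrix.mul_assoc, Matrix.mul_assoc,
      Matrix.mul_assoc]
  rw [h1, aux_trace_CtC, aux_trace_CtC]
  have step : ∀ j i, Complex.normSq ((B * Aᴴ) i j)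
      ≤ (∑ l, Complex.normSq (B i l)) * (∑ l, Complex.normSq (A j l)) := by
    intro j i
    have : (B * Aᴴ) i j = ∑ l, B i l * (starRingEnd ℂ) (A j l) := by
      simp [Matrix.mul_apply, conjTranspose_apply]
    rw [this]
    simpa [Complex.normSq_conj] using aux_cs B (fun l => (starRingEnd ℂ) (A j l)) i
  calc ∑ j, ∑ i, Complex.normSq ((B * Aᴴ) i j)
      ≤ ∑ j, ∑ i, (∑ l, Complex.normSq (B i l)) * (∑ l, Complex.normSq (A j l)) :=
        Finset.sum_le_sum fun j _ => Finset.sum_le_sum fun i _ => step j i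
    _ = (∑ j, ∑ l, Complex.normSq (A j l)) * (∑ i, ∑ l, Complex.normSq (B i l)) := by
        rw [Finset.sum_mul_sum]
        exact Finset.sum_congr rfl fun j _ => Finset.sum_congr rfl fun i _ => mul_comm _ _
    _ = (∑ i, ∑ j, Complex.normSq (A i j)) * ∑ j, ∑ i, Complex.normSq (B i j) := by
        rw [Finset.sum_comm (f := fun i j => Complex.normSq (B i j))]

lemma aux_mul_vecMulVec {m : ℕ} (B : Matrix (Fin m) (Fin m) ℂ) (v w : Fin m → ℂ) :
    B * vecMulVec v w = vecMulVec (B *ᵥ v) w := by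
  ext i k
  simp [Matrix.mul_apply, vecMulVec_apply, mulVec, dotProduct, Finset.sum_mul, mul_assoc]

lemma aux_smul_vecMulVec {m : ℕ} (c : ℂ) (v w : Fin m → ℂ) :
    vecMulVec (c • v) w = c • vecMulVec v w := by
  ext i k
  simp [vecMulVec_apply, mul_assoc]

lemma aux_trace_vecMulVec {m : ℕ} (v w : Fin m → ℂ) :
    (vecMulVec v w).trace = ∑ i, v i * w i := by
  simp [trace, vecMulVec_apply]

lemma aux_smul_psd {m : ℕ} {S : Matrix (Fin m) (Fin m) ℂ} (hS : S.PosSemidef) {b : ℝ}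
    (hb : 0 ≤ b) : ((b : ℂ) • S).PosSemidef := by
  refine Matrix.PosSemidef.of_dotProduct_mulVec_nonneg ?_ ?_
  · unfold Matrix.IsHermitian
    rw [conjTranspose_smul, hS.1.eq]
    congr 1
    simp
  · intro x
    rw [smul_mulVec, dotProduct_smul, smul_eq_mul]
    exact mul_nonneg (by exact_mod_cast Complex.zero_le_real.mpr hb) (hS.dotProduct_mulVec_nonneg x)

lemma aux_log_det_nonneg {n : ℕ} {A : Matrix (Fin n) (Fin n) ℂ} (hA : A.PosSemidef) :
    0 ≤ Real.log ((1 + A).det.re) := by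
  have h := aux_det_one_add_smul hA.1 1
  rw [Complex.ofReal_one, one_smul] at h
  rw [h, Complex.ofReal_re]
  apply Real.log_nonneg
  calc (1:ℝ) = ∏ _i : Fin n, 1 := by simp
    _ ≤ ∏ i, (1 + 1 * hA.1.eigenvalues i) :=
      Finset.prod_le_prod (fun i _ => zero_le_one)
        (fun i _ => by have := hA.eigenvalues_nonneg i; linarith)

lemma aux_log_det_le_trace {n : ℕ} {A : Matrix (Fin n) (Fin n) ℂ} (hA : A.PosSemidef) :
    Real.log ((1 + A).det.re) ≤ A.trace.re := by
  have h := aux_det_one_add_smul hA.1 1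
  rw [Complex.ofReal_one, one_smul] at h
  rw [h, Complex.ofReal_re, aux_trace_eq_sum hA.1, Complex.ofReal_re]
  have hpos : ∀ i ∈ Finset.univ, (0:ℝ) < 1 + 1 * hA.1.eigenvalues i := by
    intro i _
    have := hA.eigenvalues_nonneg i
    linarith
  rw [Real.log_prod fun i hi => ne_of_gt (hpos i hi)]
  refine Finset.sum_le_sum fun i hi => ?_
  have h2 := Real.log_le_sub_one_of_pos (hpos i hi)
  linarith

lemma aux_concave {n : ℕ} {A : Matrix (Fin n) (Fin n) ℂ} (hA : A.PosSemidef) {b : ℝ}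
    (hb0 : 0 ≤ b) (hb1 : b ≤ 1) :
    b * Real.log ((1 + A).det.re) ≤ Real.log ((1 + (b : ℂ) • A).det.re) := by
  have h := aux_det_one_add_smul hA.1 1
  rw [Complex.ofReal_one, one_smul] at h
  rw [h, Complex.ofReal_re, aux_det_one_add_smul hA.1 b, Complex.ofReal_re]
  have hpos : ∀ c : ℝ, 0 ≤ c → ∀ i ∈ Finset.univ, (0:ℝ) < 1 + c * hA.1.eigenvalues i := by
    intro c hc i _
    have := hA.eigenvalues_nonneg i
    nlinarith
  rw [Real.log_prod fun i hi => ne_of_gt (hpos 1 zero_le_one i hi),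
    Real.log_prod fun i hi => ne_of_gt (hpos b hb0 i hi), Finset.mul_sum]
  refine Finset.sum_le_sum fun i _ => ?_
  have := hA.eigenvalues_nonneg i
  simpa [one_mul] using aux_bern this hb0 hb1

end Stmt17Aux

/-- Time switching with flexible power: the energy spent to harvest `Q` is `Q/h₁`
independent of `α`, and the supremum of achievable rates equals the maximal rate
with transmit power `P − Q/h₁`. -/
theorem stmt17 {M N : ℕ} (H : Matrix (Fin N) (Fin M) ℂ) (h1 P Q : ℝ)
    (hP : 0 < P) (hh1 : 0 < h1)
    (v1 : Fin M → ℂ) (hunit : ∑ i, Complex.normSq (v1 i) = 1)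
    (heig : (Hᴴ * H) *ᵥ v1 = (h1 : ℂ) • v1)
    (hmax : ∀ (w : Fin M → ℂ) (c : ℝ), (Hᴴ * H) *ᵥ w = (c : ℂ) • w → w ≠ 0 → c ≤ h1)
    (hQ0 : 0 ≤ Q) (hQ : Q ≤ h1 * P) :
    (∀ α q : ℝ, 0 < α → α ≤ 1 → 0 ≤ q →
      α * (H * ((q : ℂ) • vecMulVec v1 (star v1)) * Hᴴ).trace.re = Q →
      α * (((q : ℂ) • vecMulVec v1 (star v1) : Matrix (Fin M) (Fin M) ℂ)).trace.re = Q / h1) ∧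
    sSup {r : ℝ | ∃ (α : ℝ) (S1 : Matrix (Fin M) (Fin M) ℂ), 0 < α ∧ α < 1 ∧
        S1.PosSemidef ∧ (1 - α) * S1.trace.re ≤ P - Q / h1 ∧
        r = (1 - α) * Real.log ((1 + H * S1 * Hᴴ).det.re)} =
      sSup {r : ℝ | ∃ S : Matrix (Fin M) (Fin M) ℂ, S.PosSemidef ∧
        S.trace.re ≤ P - Q / h1 ∧ r = Real.log ((1 + H * S * Hᴴ).det.re)} := by
  have hh1' : h1 ≠ 0 := ne_of_gt hh1
  have hvv : (vecMulVec v1 (star v1)).trace = 1 := by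
    rw [aux_trace_vecMulVec]
    have : ∀ i, v1 i * (star v1) i = ((Complex.normSq (v1 i) : ℝ) : ℂ) := by
      intro i
      simp [Pi.star_apply, Complex.mul_conj]
    rw [Finset.sum_congr rfl fun i _ => this i, ← Complex.ofReal_sum, hunit, Complex.ofReal_one]
  constructor
  · intro α q hα hα1 hq hEq
    have htr2 : (H * ((q : ℂ) • vecMulVec v1 (star v1)) * Hᴴ).trace = ((q * h1 : ℝ) : ℂ) := by
      rw [trace_mul_cycle, Matrix.mul_smul, trace_smul, aux_mul_vecMulVec, heig,
        aux_smul_vecMulVec, trace_smul, hvv]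
      simp only [smul_eq_mul, mul_one]
      push_cast
      ring
    rw [htr2, Complex.ofReal_re] at hEq
    rw [trace_smul, hvv]
    simp only [smul_eq_mul, mul_one, Complex.ofReal_re]
    rw [eq_div_iff hh1', ← hEq]
    ring
  · -- second part
    set P' := P - Q / h1 with hP'def
    have hP' : 0 ≤ P' := by
      rw [hP'def, sub_nonneg, div_le_iff₀ hh1]
      linarith [hQ]
    set K := ∑ i, ∑ j, Complex.normSq (H i j) with hKdef
    have hK0 : 0 ≤ K :=
      Finset.sum_nonneg fun i _ => Finset.sum_nonneg fun j _ => Complex.normSq_nonneg _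
    have htr_nn : ∀ (S : Matrix (Fin M) (Fin M) ℂ), S.PosSemidef → 0 ≤ S.trace.re := by
      intro S hS
      rw [aux_trace_eq_sum hS.1, Complex.ofReal_re]
      exact Finset.sum_nonneg fun i _ => hS.eigenvalues_nonneg i
    set SA := {r : ℝ | ∃ (α : ℝ) (S1 : Matrix (Fin M) (Fin M) ℂ), 0 < α ∧ α < 1 ∧
        S1.PosSemidef ∧ (1 - α) * S1.trace.re ≤ P' ∧
        r = (1 - α) * Real.log ((1 + H * S1 * Hᴴ).det.re)} with hSAdef
    set SB := {r : ℝ | ∃ S : Matrix (Fin M) (Fin M) ℂ, S.PosSemidef ∧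
        S.trace.re ≤ P' ∧ r = Real.log ((1 + H * S * Hᴴ).det.re)} with hSBdef
    have h0A : (0:ℝ) ∈ SA := by
      refine ⟨1/2, 0, by norm_num, by norm_num, Matrix.PosSemidef.zero, by simp [hP'], ?_⟩
      simp
    have h0B : (0:ℝ) ∈ SB := by
      refine ⟨0, Matrix.PosSemidef.zero, by simp [hP'], ?_⟩
      simp
    have hubB : ∀ r ∈ SB, r ≤ K * P' := by
      rintro r ⟨S, hS, htr, rfl⟩
      calc Real.log ((1 + H * S * Hᴴ).det.re) ≤ (H * S * Hᴴ).trace.re :=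
            aux_log_det_le_trace (hS.mul_mul_conjTranspose_same H)
        _ ≤ K * S.trace.re := aux_trace_bound H hS
        _ ≤ K * P' := mul_le_mul_of_nonneg_left htr hK0
    have hubA : ∀ r ∈ SA, r ≤ K * P' := by
      rintro r ⟨α, S1, hα0, hα1, hS1, htr, rfl⟩
      have hβ0 : (0:ℝ) ≤ 1 - α := by linarith
      calc (1 - α) * Real.log ((1 + H * S1 * Hᴴ).det.re)
          ≤ (1 - α) * ((H * S1 * Hᴴ).trace.re) :=
            mul_le_mul_of_nonneg_left (aux_log_det_le_trace (hS1.mul_mul_conjTranspose_same H)) hβ0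
        _ ≤ (1 - α) * (K * S1.trace.re) :=
            mul_le_mul_of_nonneg_left (aux_trace_bound H hS1) hβ0
        _ = K * ((1 - α) * S1.trace.re) := by ring
        _ ≤ K * P' := mul_le_mul_of_nonneg_left htr hK0
    have hbddA : BddAbove SA := ⟨K * P', fun r hr => hubA r hr⟩
    have hbddB : BddAbove SB := ⟨K * P', fun r hr => hubB r hr⟩
    refine le_antisymm ?_ ?_
    · refine csSup_le ⟨0, h0A⟩ ?_
      rintro r ⟨α, S1, hα0, hα1, hS1, htr, rfl⟩
      have hβ0 : (0:ℝ) ≤ 1 - α := by linarith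
      have hβ1 : (1:ℝ) - α ≤ 1 := by linarith
      have hpsd : (((1 - α : ℝ) : ℂ) • S1).PosSemidef := aux_smul_psd hS1 hβ0
      have htr' : ((((1 - α : ℝ) : ℂ) • S1).trace).re ≤ P' := by
        rw [trace_smul, smul_eq_mul, Complex.mul_re]
        simpa using htr
      have hmem : Real.log ((1 + H * (((1 - α : ℝ) : ℂ) • S1) * Hᴴ).det.re) ∈ SB :=
        ⟨((1 - α : ℝ) : ℂ) • S1, hpsd, htr', rfl⟩
      refine le_csSup_of_le hbddB hmem ?_
      have hrw : H * (((1 - α : ℝ) : ℂ) • S1) * Hᴴ = ((1 - α : ℝ) : ℂ) • (H * S1 * Hᴴ) := by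
        rw [Matrix.mul_smul, Matrix.smul_mul]
      rw [hrw]
      exact aux_concave (hS1.mul_mul_conjTranspose_same H) hβ0 hβ1
    · refine csSup_le ⟨0, h0B⟩ ?_
      rintro r ⟨S, hS, htr, rfl⟩
      set L := Real.log ((1 + H * S * Hᴴ).det.re) with hLdef
      have hLnn : 0 ≤ L := aux_log_det_nonneg (hS.mul_mul_conjTranspose_same H)
      refine le_of_forall_sub_le fun ε hε => ?_
      have hL1 : (0:ℝ) < L + 1 := by linarith
      set α := min (2⁻¹ : ℝ) (ε / (L + 1)) with hαdef
      have hα0 : 0 < α := lt_min (by norm_num) (div_pos hε hL1)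
      have hα1 : α < 1 := lt_of_le_of_lt (min_le_left _ _) (by norm_num)
      have hmem : (1 - α) * L ∈ SA := by
        refine ⟨α, S, hα0, hα1, hS, ?_, rfl⟩
        have h2 := htr_nn S hS
        nlinarith [htr]
      have hαL : α * L ≤ ε := by
        have h3 : α ≤ ε / (L + 1) := min_le_right _ _
        have h4 : α * (L + 1) ≤ ε / (L + 1) * (L + 1) :=
          mul_le_mul_of_nonneg_right h3 (le_of_lt hL1)
        rw [div_mul_cancel₀ _ (ne_of_gt hL1)] at h4
        nlinarith
      have h5 : L - ε ≤ (1 - α) * L := by nlinarith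
      exact h5.trans (le_csSup hbddA hmem)
end

section
/- Suppose P ≤ 1/h₂ − 1/h₁ with h₁ ≥ h₂ > 0 the top two eigenvalues of HᴴH. Then for every harvested power Q ∈ [0, h₁P], the uniform power splitting scheme with ρ = Q/(h₁P) and rank-one covariance S = P v₁v₁ᴴ (v₁ a top unit eigenvector of HᴴH) harvests exactly ρ·tr(H S Hᴴ) = Q and achieves rate log(1 + (1−ρ)h₁P) = log(1 + h₁P − Q), which equals the maximal time-switching (flexible power) rate max{log det(I + H S' Hᴴ) : tr(S') ≤ P − Q/h₁}. Hence the uniform-power-splitting and flexible time-switching rate-energy regions coincide in this regime. -/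
open Matrix ComplexOrder

namespace Stmt19Aux

set_option linter.unusedSectionVars false

variable {m n : Type*} [Fintype m] [Fintype n] [DecidableEq m] [DecidableEq n]

lemma mul_vecMulVec {p : Type*} (A : Matrix m n ℂ) (a : n → ℂ) (b : p → ℂ) :
    A * vecMulVec a b = vecMulVec (A *ᵥ a) b := by
  ext x y
  simp [Matrix.mul_apply, vecMulVec_apply, mulVec, dotProduct, Finset.sum_mul, mul_assoc]

lemma vecMulVec_mul {p : Type*} (A : Matrix m n ℂ) (a : p → ℂ) (b : m → ℂ) :
    vecMulVec a b * A = vecMulVec a (b ᵥ* A) := by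
  ext x y
  simp [Matrix.mul_apply, vecMulVec_apply, vecMul, dotProduct, Finset.mul_sum, mul_assoc]

lemma smul_vecMulVec (c : ℂ) (a b : n → ℂ) :
    c • vecMulVec a b = vecMulVec (c • a) b := by
  ext x y
  simp [vecMulVec_apply, mul_assoc]

lemma trace_vecMulVec (a b : n → ℂ) : (vecMulVec a b).trace = b ⬝ᵥ a := by
  simp [Matrix.trace, Matrix.diag, vecMulVec_apply, dotProduct, mul_comm]

lemma det_one_add_smul_vecMulVec (c : ℂ) (z : n → ℂ) :
    (1 + c • vecMulVec z (star z)).det = 1 + c * (star z ⬝ᵥ z) := by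
  rw [smul_vecMulVec, vecMulVec_eq Unit, det_one_add_replicateCol_mul_replicateRow]
  rw [dotProduct_smul]
  simp [smul_eq_mul]




lemma smul_vecMulVec' (c : ℂ) (a b : n → ℂ) :
    c • vecMulVec a b = vecMulVec (c • a) b := by
  ext x y
  simp [vecMulVec_apply, mul_assoc]

lemma psd_real_smul {A : Matrix n n ℂ} (hA : A.PosSemidef) {c : ℝ} (hc : 0 ≤ c) :
    ((c : ℂ) • A).PosSemidef := by
  refine Matrix.PosSemidef.of_dotProduct_mulVec_nonneg ?_ ?_
  · show ((c : ℂ) • A)ᴴ = _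
    rw [conjTranspose_smul, hA.1.eq]
    simp
  · intro x
    rw [smul_mulVec, dotProduct_smul, smul_eq_mul]
    exact mul_nonneg (Complex.zero_le_real.2 hc) (hA.dotProduct_mulVec_nonneg x)

lemma psd_vecMulVec (z : n → ℂ) : (vecMulVec z (star z)).PosSemidef := by
  rw [vecMulVec_eq Unit, ← conjTranspose_replicateCol]
  exact posSemidef_self_mul_conjTranspose _

/-- rank-one update determinant: X invertible. -/
lemma det_add_smul_vecMulVec {X : Matrix n n ℂ} (hX : IsUnit X.det) (c : ℂ) (z : n → ℂ) :
    (X + c • vecMulVec z (star z)).det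
      = X.det * (1 + c * (star z ⬝ᵥ X⁻¹ *ᵥ z)) := by
  rw [smul_vecMulVec', vecMulVec_eq Unit, det_add_replicateCol_mul_replicateRow hX]
  congr 1
  rw [det_unique]
  rw [Matrix.add_apply, Matrix.one_apply_eq]
  rw [← Matrix.replicateRow_vecMul, Matrix.replicateRow_mul_replicateCol_apply, ← dotProduct_mulVec, mulVec_smul,
    dotProduct_smul, smul_eq_mul]

end Stmt19Aux

namespace Stmt19Aux
variable {n : Type*} [Fintype n] [DecidableEq n]

lemma one_add_posDef {B : Matrix n n ℂ} (hB : B.PosSemidef) : (1 + B).PosDef :=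
  Matrix.PosDef.add_posSemidef Matrix.PosDef.one hB

lemma inner_inv_le {B : Matrix n n ℂ} (hB : B.PosSemidef) (z : n → ℂ) :
    star z ⬝ᵥ (1 + B)⁻¹ *ᵥ z ≤ star z ⬝ᵥ z := by
  set X := 1 + B with hXdef
  have hXpd : X.PosDef := one_add_posDef hB
  have hXu : IsUnit X.det := isUnit_iff_ne_zero.2 hXpd.det_pos.ne'
  have hinv : X * X⁻¹ = 1 := Matrix.mul_nonsing_inv X hXu
  set u := X⁻¹ *ᵥ z with hu
  have hz : X *ᵥ u = z := by rw [hu, mulVec_mulVec, hinv, one_mulVec]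
  have hherm : Xᴴ = X := by
    rw [hXdef, conjTranspose_add, conjTranspose_one, hB.1.eq]
  have e1 : star z ⬝ᵥ u = star u ⬝ᵥ X *ᵥ u := by
    conv_lhs => rw [← hz]
    rw [star_mulVec, ← dotProduct_mulVec, hherm]
  have e2 : star z ⬝ᵥ z = star u ⬝ᵥ (X * X) *ᵥ u := by
    conv_lhs => rw [← hz]
    rw [star_mulVec, ← dotProduct_mulVec, mulVec_mulVec, hherm]
  rw [e1, e2]
  have hdiff : (X * X - X).PosSemidef := by
    have : X * X - X = B + Bᴴ * B := by
      rw [hXdef]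
      rw [hB.1.eq]
      noncomm_ring
    rw [this]
    exact hB.add (posSemidef_conjTranspose_mul_self B)
  have h0 := hdiff.dotProduct_mulVec_nonneg u
  rw [sub_mulVec, dotProduct_sub, sub_nonneg] at h0
  exact h0

lemma psd_sum {ι : Type*} (s : Finset ι) (f : ι → Matrix n n ℂ)
    (hf : ∀ i ∈ s, (f i).PosSemidef) : (∑ i ∈ s, f i).PosSemidef := by
  classical
  induction s using Finset.induction_on with
  | empty => simpa using Matrix.PosSemidef.zero
  | insert j s hj ih =>
    rw [Finset.sum_insert hj]
    exact (hf _ (Finset.mem_insert_self _ _)).add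
      (ih fun i hi => hf i (Finset.mem_insert_of_mem hi))

lemma det_le_prod {ι : Type*} (lam : ι → ℝ) (hlam : ∀ i, 0 ≤ lam i)
    (z : ι → n → ℂ) (s : Finset ι) :
    (1 + ∑ i ∈ s, ((lam i : ℂ) • vecMulVec (z i) (star (z i)))).det
      ≤ ∏ i ∈ s, (1 + (lam i : ℂ) * (star (z i) ⬝ᵥ z i)) := by
  classical
  induction s using Finset.induction_on with
  | empty => simp
  | insert j s hj ih =>
    set B := ∑ i ∈ s, ((lam i : ℂ) • vecMulVec (z i) (star (z i))) with hB
    have hBpsd : B.PosSemidef :=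
      psd_sum _ _ fun i _ => psd_real_smul (psd_vecMulVec (z i)) (hlam i)
    have hXpd : (1 + B).PosDef := one_add_posDef hBpsd
    have hXu : IsUnit (1 + B).det := isUnit_iff_ne_zero.2 hXpd.det_pos.ne'
    have hrw : (1 : Matrix n n ℂ) + ∑ i ∈ insert j s, ((lam i : ℂ) • vecMulVec (z i) (star (z i)))
        = (1 + B) + (lam j : ℂ) • vecMulVec (z j) (star (z j)) := by
      rw [Finset.sum_insert hj, hB]
      abel
    rw [hrw, det_add_smul_vecMulVec hXu]
    have hc : (0:ℂ) ≤ (lam j : ℂ) := Complex.zero_le_real.2 (hlam j)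
    have h1 : (1 : ℂ) + (lam j : ℂ) * (star (z j) ⬝ᵥ (1+B)⁻¹ *ᵥ z j)
        ≤ 1 + (lam j : ℂ) * (star (z j) ⬝ᵥ z j) :=
      add_le_add_right (mul_le_mul_of_nonneg_left (inner_inv_le hBpsd (z j)) hc) 1
    have h2 : (0:ℂ) ≤ 1 + (lam j : ℂ) * (star (z j) ⬝ᵥ z j) := by
      have := dotProduct_star_self_nonneg (z j)
      positivity
    calc (1+B).det * (1 + (lam j : ℂ) * (star (z j) ⬝ᵥ (1+B)⁻¹ *ᵥ z j))
        ≤ (1+B).det * (1 + (lam j : ℂ) * (star (z j) ⬝ᵥ z j)) :=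
          mul_le_mul_of_nonneg_left h1 hXpd.det_pos.le
      _ ≤ (∏ i ∈ s, (1 + (lam i : ℂ) * (star (z i) ⬝ᵥ z i)))
            * (1 + (lam j : ℂ) * (star (z j) ⬝ᵥ z j)) :=
          mul_le_mul_of_nonneg_right ih h2
      _ = ∏ i ∈ insert j s, (1 + (lam i : ℂ) * (star (z i) ⬝ᵥ z i)) := by
          rw [Finset.prod_insert hj, mul_comm]

lemma scalar_step {h1 h2 a b : ℝ} (hh2 : 0 < h2) (hh12 : h2 ≤ h1) (ha : 0 ≤ a) (hb : 0 ≤ b)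
    (hcap : a ≤ 1/h2 - 1/h1) : (1 + h1*a) * (1 + h2*b) ≤ 1 + h1*(a+b) := by
  have hh1 : 0 < h1 := lt_of_lt_of_le hh2 hh12
  have key : h1 * h2 * a ≤ h1 - h2 := by
    have := mul_le_mul_of_nonneg_left hcap (le_of_lt (mul_pos hh1 hh2))
    calc h1 * h2 * a ≤ h1 * h2 * (1/h2 - 1/h1) := by
          exact mul_le_mul_of_nonneg_left hcap (le_of_lt (mul_pos hh1 hh2))
      _ = h1 - h2 := by field_simp
  nlinarith [mul_nonneg ha hb, hb]

lemma scalar_peel {ι : Type*} {h1 h2 : ℝ} (hh2 : 0 < h2) (hh12 : h2 ≤ h1)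
    (q lamv : ι → ℝ) (s : Finset ι)
    (hlam : ∀ i ∈ s, 0 ≤ lamv i ∧ lamv i ≤ h2) (hq : ∀ i ∈ s, 0 ≤ q i) :
    ∀ a : ℝ, 0 ≤ a → a + ∑ i ∈ s, q i ≤ 1/h2 - 1/h1 →
      (1 + h1*a) * ∏ i ∈ s, (1 + lamv i * q i) ≤ 1 + h1*(a + ∑ i ∈ s, q i) := by
  classical
  have hh1 : 0 < h1 := lt_of_lt_of_le hh2 hh12
  induction s using Finset.induction_on with
  | empty => intro a ha hcap; simp
  | insert j s hj ih =>
    intro a ha hcap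
    have hqj : 0 ≤ q j := hq j (Finset.mem_insert_self _ _)
    have hqs : 0 ≤ ∑ i ∈ s, q i :=
      Finset.sum_nonneg fun i hi => hq i (Finset.mem_insert_of_mem hi)
    rw [Finset.sum_insert hj] at hcap ⊢
    have hprod_nonneg : 0 ≤ ∏ i ∈ s, (1 + lamv i * q i) :=
      Finset.prod_nonneg fun i hi => by
        have h := hlam i (Finset.mem_insert_of_mem hi)
        have := hq i (Finset.mem_insert_of_mem hi)
        nlinarith [mul_nonneg h.1 this]
    have hstep : (1 + h1*a) * (1 + lamv j * q j) ≤ 1 + h1*(a + q j) := by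
      have hl := hlam j (Finset.mem_insert_self _ _)
      have h2b : (1 + h1*a) * (1 + lamv j * q j) ≤ (1 + h1*a) * (1 + h2 * q j) := by
        apply mul_le_mul_of_nonneg_left _ (by nlinarith)
        nlinarith [mul_le_mul_of_nonneg_right hl.2 hqj]
      refine h2b.trans (scalar_step hh2 hh12 ha hqj ?_)
      nlinarith
    calc (1 + h1*a) * ∏ i ∈ insert j s, (1 + lamv i * q i)
        = ((1 + h1*a) * (1 + lamv j * q j)) * ∏ i ∈ s, (1 + lamv i * q i) := by
          rw [Finset.prod_insert hj]; ring
      _ ≤ (1 + h1*(a + q j)) * ∏ i ∈ s, (1 + lamv i * q i) :=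
          mul_le_mul_of_nonneg_right hstep hprod_nonneg
      _ ≤ 1 + h1*((a + q j) + ∑ i ∈ s, q i) := by
          apply ih (fun i hi => hlam i (Finset.mem_insert_of_mem hi))
            (fun i hi => hq i (Finset.mem_insert_of_mem hi)) _ (by nlinarith)
          nlinarith
      _ = 1 + h1*(a + (q j + ∑ i ∈ s, q i)) := by ring

section Eigen

variable {m : ℕ} {A : Matrix (Fin m) (Fin m) ℂ} (hA : A.IsHermitian)

lemma real_smul_eq_coe_smul (r : ℝ) (w : Fin m → ℂ) : r • w = (r : ℂ) • w := by
  funext i; simp [Complex.real_smul]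

lemma udot (i j : Fin m) :
    star ⇑(hA.eigenvectorBasis i) ⬝ᵥ ⇑(hA.eigenvectorBasis j) = if i = j then 1 else 0 := by
  have hUU : (star (hA.eigenvectorUnitary : Matrix (Fin m) (Fin m) ℂ))
      * (hA.eigenvectorUnitary : Matrix (Fin m) (Fin m) ℂ) = 1 := by
    exact_mod_cast Unitary.coe_star_mul_self hA.eigenvectorUnitary
  have h := congrFun (congrFun hUU i) j
  rw [Matrix.mul_apply] at h
  simp only [Matrix.star_apply, Matrix.IsHermitian.eigenvectorUnitary_apply] at h
  rw [dotProduct]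
  simp only [Pi.star_apply]
  rw [h, Matrix.one_apply]

lemma u_ne_zero (i : Fin m) : (⇑(hA.eigenvectorBasis i) : Fin m → ℂ) ≠ 0 := by
  intro h0
  have := udot hA i i
  rw [h0] at this
  simp at this

lemma eigen_coe (i : Fin m) :
    A *ᵥ ⇑(hA.eigenvectorBasis i) = ((hA.eigenvalues i : ℂ)) • ⇑(hA.eigenvectorBasis i) := by
  rw [hA.mulVec_eigenvectorBasis, real_smul_eq_coe_smul]

lemma orth_of_ne {h1 : ℝ} {v1 : Fin m → ℂ} (heig : A *ᵥ v1 = (h1 : ℂ) • v1) (i : Fin m)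
    (hne : hA.eigenvalues i ≠ h1) : star v1 ⬝ᵥ ⇑(hA.eigenvectorBasis i) = 0 := by
  set u := ⇑(hA.eigenvectorBasis i)
  have w1 : star v1 ⬝ᵥ (A *ᵥ u) = (hA.eigenvalues i : ℂ) * (star v1 ⬝ᵥ u) := by
    rw [eigen_coe hA i, dotProduct_smul, smul_eq_mul]
  have w2 : star v1 ⬝ᵥ (A *ᵥ u) = (h1 : ℂ) * (star v1 ⬝ᵥ u) := by
    rw [dotProduct_mulVec]
    have : star v1 ᵥ* A = (h1:ℂ) • star v1 := by
      have : star v1 ᵥ* Aᴴ = star (A *ᵥ v1) := (star_mulVec A v1).symm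
      rw [hA.eq] at this
      rw [this, heig, star_smul]
      simp
    rw [this, smul_dotProduct, smul_eq_mul]
  have : ((hA.eigenvalues i : ℂ) - (h1:ℂ)) * (star v1 ⬝ᵥ u) = 0 := by
    rw [sub_mul, w1.symm.trans w2]; ring
  rcases mul_eq_zero.1 this with h | h
  · exact absurd (by exact_mod_cast sub_eq_zero.1 h) hne
  · exact h

lemma exists_i0 {h1 h2 : ℝ} (hh2 : 0 < h2) (hm : 0 < m) {v1 : Fin m → ℂ}
    (heig : A *ᵥ v1 = (h1 : ℂ) • v1)
    (hmax : ∀ (w : Fin m → ℂ) (c : ℝ), A *ᵥ w = (c : ℂ) • w → w ≠ 0 → c ≤ h1)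
    (hsecond : ∀ (w : Fin m → ℂ) (c : ℝ), A *ᵥ w = (c : ℂ) • w → w ≠ 0 →
      star v1 ⬝ᵥ w = 0 → c ≤ h2) :
    (∀ i, hA.eigenvalues i ≤ h1) ∧ ∃ i0 : Fin m, ∀ i, i ≠ i0 → hA.eigenvalues i ≤ h2 := by
  have hle1 : ∀ i, hA.eigenvalues i ≤ h1 := fun i =>
    hmax _ _ (eigen_coe hA i) (u_ne_zero hA i)
  refine ⟨hle1, ?_⟩
  have key : ∀ i, hA.eigenvalues i ≠ h1 → hA.eigenvalues i ≤ h2 := fun i hne =>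
    hsecond _ _ (eigen_coe hA i) (u_ne_zero hA i) (orth_of_ne hA heig i hne)
  by_cases hex : ∃ i, h2 < hA.eigenvalues i
  · obtain ⟨i0, hi0⟩ := hex
    have hi0h1 : hA.eigenvalues i0 = h1 := by
      by_contra hne
      exact absurd (key i0 hne) (not_le.2 hi0)
    refine ⟨i0, fun i hne => ?_⟩
    by_contra hgt
    push_neg at hgt
    have hih1 : hA.eigenvalues i = h1 := by
      by_contra hne'
      exact absurd (key i hne') (not_le.2 hgt)
    -- two orthonormal eigenvectors with eigenvalue h1
    set ui := ⇑(hA.eigenvectorBasis i)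
    set u0 := ⇑(hA.eigenvectorBasis i0)
    set ci := star v1 ⬝ᵥ ui with hci
    set c0 := star v1 ⬝ᵥ u0 with hc0
    set w := c0 • ui - ci • u0 with hw
    have heigw : A *ᵥ w = (h1 : ℂ) • w := by
      rw [hw, mulVec_sub, mulVec_smul, mulVec_smul, eigen_coe hA i, eigen_coe hA i0,
        hih1, hi0h1, smul_sub]
      rw [smul_comm (c0 : ℂ) ((h1:ℂ)), smul_comm (ci : ℂ) ((h1:ℂ))]
    have horthw : star v1 ⬝ᵥ w = 0 := by
      rw [hw, dotProduct_sub, dotProduct_smul, dotProduct_smul, ← hci, ← hc0]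
      simp [mul_comm]
    have hh1le : h1 ≤ h2 := by
      by_cases hwz : w = 0
      · -- then c0 = 0, so u0 ⊥ v1
        have : star ui ⬝ᵥ w = c0 := by
          rw [hw, dotProduct_sub, dotProduct_smul, dotProduct_smul, udot hA i i,
            udot hA i i0, if_pos rfl, if_neg hne]
          simp
        rw [hwz, dotProduct_zero] at this
        have hc00 : c0 = 0 := this.symm
        have := hsecond u0 (hA.eigenvalues i0) (eigen_coe hA i0) (u_ne_zero hA i0)
          (by rw [← hc0]; exact hc00)
        rwa [hi0h1] at this
      · have := hsecond w h1 heigw hwz horthw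
        exact this
    rw [hih1] at hgt
    exact absurd hh1le (not_le.2 hgt)
  · push_neg at hex
    exact ⟨⟨0, hm⟩, fun i _ => hex i⟩

end Eigen

section Main

variable {m : ℕ} {A : Matrix (Fin m) (Fin m) ℂ}

lemma spectral_sum (hA : A.IsHermitian) :
    A = ∑ i, ((hA.eigenvalues i : ℂ)) •
      vecMulVec ⇑(hA.eigenvectorBasis i) (star ⇑(hA.eigenvectorBasis i)) := by
  conv_lhs => rw [hA.spectral_theorem, Unitary.conjStarAlgAut_apply]
  ext a b
  rw [Matrix.mul_apply, Matrix.sum_apply]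
  refine Finset.sum_congr rfl fun x _ => ?_
  rw [Matrix.mul_diagonal]
  simp only [Matrix.smul_apply, vecMulVec_apply, Matrix.star_apply,
    Matrix.IsHermitian.eigenvectorUnitary_apply, Function.comp_apply, Pi.star_apply,
    smul_eq_mul]
  ac_rfl

lemma conj_rankone (R : Matrix (Fin m) (Fin m) ℂ) (hR : Rᴴ = R) (a : Fin m → ℂ) :
    R * vecMulVec a (star a) * R = vecMulVec (R *ᵥ a) (star (R *ᵥ a)) := by
  rw [Stmt19Aux.mul_vecMulVec, vecMulVec_mul]
  congr 1
  rw [star_mulVec, hR]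

lemma sum_inner_eq_trace (hA : A.IsHermitian) (S' : Matrix (Fin m) (Fin m) ℂ) :
    ∑ i, star ⇑(hA.eigenvectorBasis i) ⬝ᵥ (S' *ᵥ ⇑(hA.eigenvectorBasis i)) = S'.trace := by
  set U := (hA.eigenvectorUnitary : Matrix (Fin m) (Fin m) ℂ) with hU
  have entry : ∀ i, star ⇑(hA.eigenvectorBasis i) ⬝ᵥ (S' *ᵥ ⇑(hA.eigenvectorBasis i))
      = (star U * S' * U) i i := by
    intro i
    rw [Matrix.mul_apply, dotProduct]
    simp only [Pi.star_apply, mulVec, dotProduct, Matrix.mul_apply, Matrix.star_apply,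
      Matrix.IsHermitian.eigenvectorUnitary_apply, hU]
    simp only [Finset.mul_sum, Finset.sum_mul]
    rw [Finset.sum_comm]
    refine Finset.sum_congr rfl fun a _ => Finset.sum_congr rfl fun b _ => ?_
    ac_rfl
  calc ∑ i, star ⇑(hA.eigenvectorBasis i) ⬝ᵥ (S' *ᵥ ⇑(hA.eigenvectorBasis i))
      = (star U * S' * U).trace := by
        rw [Matrix.trace]; exact Finset.sum_congr rfl fun i _ => entry i
    _ = S'.trace := by
        have hUU : U * star U = 1 := by
          rw [hU]; exact_mod_cast Unitary.coe_mul_star_self hA.eigenvectorUnitary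
        rw [Matrix.trace_mul_cycle, hUU, one_mul]

open scoped MatrixOrder Matrix.Norms.L2Operator in
lemma exists_herm_sqrt {k : ℕ} {S' : Matrix (Fin k) (Fin k) ℂ} (hS' : S'.PosSemidef) :
    ∃ R : Matrix (Fin k) (Fin k) ℂ, Rᴴ = R ∧ R * R = S' := by
  refine ⟨CFC.sqrt S', ?_, ?_⟩
  · exact (CFC.sqrt_nonneg S').posSemidef.1
  · exact CFC.sqrt_mul_sqrt_self S' hS'.nonneg

lemma det_bound {Mn Nn : ℕ} (Hm : Matrix (Fin Nn) (Fin Mn) ℂ) {h1 h2 P' : ℝ}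
    (hh2 : 0 < h2) (hh12 : h2 ≤ h1) (hm : 0 < Mn) {v1 : Fin Mn → ℂ}
    (heig : (Hmᴴ * Hm) *ᵥ v1 = (h1 : ℂ) • v1)
    (hmax : ∀ (w : Fin Mn → ℂ) (c : ℝ), (Hmᴴ * Hm) *ᵥ w = (c : ℂ) • w → w ≠ 0 → c ≤ h1)
    (hsecond : ∀ (w : Fin Mn → ℂ) (c : ℝ), (Hmᴴ * Hm) *ᵥ w = (c : ℂ) • w → w ≠ 0 →
      star v1 ⬝ᵥ w = 0 → c ≤ h2)
    (hcap : P' ≤ 1/h2 - 1/h1)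
    {S' : Matrix (Fin Mn) (Fin Mn) ℂ} (hS' : S'.PosSemidef) (htr : S'.trace.re ≤ P') :
    ((1 : Matrix (Fin Nn) (Fin Nn) ℂ) + Hm * S' * Hmᴴ).det.re ≤ 1 + h1 * P' := by
  classical
  have hh1 : 0 < h1 := lt_of_lt_of_le hh2 hh12
  set A := Hmᴴ * Hm with hAdef
  have hApsd : A.PosSemidef := posSemidef_conjTranspose_mul_self Hm
  have hA : A.IsHermitian := hApsd.1
  obtain ⟨R, hRh, hRR⟩ := exists_herm_sqrt hS'
  set u : Fin Mn → Fin Mn → ℂ := fun i => ⇑(hA.eigenvectorBasis i) with hu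
  set lam := hA.eigenvalues with hlam
  set z : Fin Mn → Fin Mn → ℂ := fun i => R *ᵥ u i with hz
  have hdet1 : ((1 : Matrix (Fin Nn) (Fin Nn) ℂ) + Hm * S' * Hmᴴ).det
      = (1 + R * A * R).det := by
    calc ((1 : Matrix (Fin Nn) (Fin Nn) ℂ) + Hm * S' * Hmᴴ).det
        = (1 + Hmᴴ * (Hm * S')).det := det_one_add_mul_comm _ _
      _ = (1 + (A * R) * R).det := by
          rw [← Matrix.mul_assoc, ← hAdef, ← hRR, ← Matrix.mul_assoc]
      _ = (1 + R * (A * R)).det := det_one_add_mul_comm _ _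
      _ = (1 + R * A * R).det := by rw [← Matrix.mul_assoc]
  have hsum : R * A * R = ∑ i, ((lam i : ℂ)) • vecMulVec (z i) (star (z i)) := by
    conv_lhs => rw [spectral_sum hA]
    rw [Finset.mul_sum, Finset.sum_mul]
    refine Finset.sum_congr rfl fun i _ => ?_
    rw [Matrix.mul_smul, Matrix.smul_mul, conj_rankone R hRh (u i)]
  have hbound := det_le_prod lam hApsd.eigenvalues_nonneg z Finset.univ
  rw [← hsum] at hbound
  have hnq : ∀ i, star (z i) ⬝ᵥ z i = star (u i) ⬝ᵥ (S' *ᵥ u i) := by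
    intro i
    show star (R *ᵥ u i) ⬝ᵥ (R *ᵥ u i) = _
    rw [star_mulVec, hRh, ← dotProduct_mulVec, mulVec_mulVec, hRR]
  set q : Fin Mn → ℝ := fun i => (star (u i) ⬝ᵥ (S' *ᵥ u i)).re with hqdef
  have hq0 : ∀ i, 0 ≤ q i := by
    intro i
    exact (Complex.nonneg_iff.1 (hS'.dotProduct_mulVec_nonneg (u i))).1
  have hqc : ∀ i, star (u i) ⬝ᵥ (S' *ᵥ u i) = (q i : ℂ) := by
    intro i
    have him := (Complex.nonneg_iff.1 (hS'.dotProduct_mulVec_nonneg (u i))).2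
    apply Complex.ext
    · simp [hqdef]
    · simp [hqdef, ← him]
  have hsumq : ∑ i, q i = S'.trace.re := by
    have h := sum_inner_eq_trace hA S'
    calc ∑ i, q i = (∑ i, star (u i) ⬝ᵥ (S' *ᵥ u i)).re := by
          rw [Complex.re_sum]
      _ = S'.trace.re := by rw [h]
  have hprodR : (∏ i, (1 + (lam i : ℂ) * (star (z i) ⬝ᵥ z i)))
      = ((∏ i, (1 + lam i * q i) : ℝ) : ℂ) := by
    push_cast
    refine Finset.prod_congr rfl fun i _ => ?_
    rw [hnq i, hqc i]
  have hre : ((1 : Matrix (Fin Nn) (Fin Nn) ℂ) + Hm * S' * Hmᴴ).det.re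
      ≤ ∏ i, (1 + lam i * q i) := by
    rw [hdet1]
    rw [hprodR] at hbound
    have := (Complex.le_def.1 hbound).1
    rwa [Complex.ofReal_re] at this
  refine hre.trans ?_
  obtain ⟨hle1, i0, hi2⟩ := exists_i0 hA hh2 hm heig hmax hsecond
  have hsum_le : ∑ i, q i ≤ P' := hsumq ▸ htr
  have hcap' : q i0 + ∑ i ∈ Finset.univ.erase i0, q i ≤ 1/h2 - 1/h1 := by
    rw [Finset.add_sum_erase _ _ (Finset.mem_univ i0)]
    exact hsum_le.trans hcap
  have peel := scalar_peel hh2 hh12 q lam (Finset.univ.erase i0)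
    (fun i hi => ⟨hApsd.eigenvalues_nonneg i, hi2 i (Finset.ne_of_mem_erase hi)⟩)
    (fun i _ => hq0 i) (q i0) (hq0 i0) hcap'
  have hprod_nn : 0 ≤ ∏ i ∈ Finset.univ.erase i0, (1 + lam i * q i) :=
    Finset.prod_nonneg fun i _ => by
      nlinarith [mul_nonneg (hApsd.eigenvalues_nonneg i) (hq0 i)]
  calc ∏ i, (1 + lam i * q i)
      = (1 + lam i0 * q i0) * ∏ i ∈ Finset.univ.erase i0, (1 + lam i * q i) :=
        (Finset.mul_prod_erase Finset.univ _ (Finset.mem_univ i0)).symm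
    _ ≤ (1 + h1 * q i0) * ∏ i ∈ Finset.univ.erase i0, (1 + lam i * q i) := by
        apply mul_le_mul_of_nonneg_right _ hprod_nn
        have := mul_le_mul_of_nonneg_right (hle1 i0) (hq0 i0)
        linarith
    _ ≤ 1 + h1 * (q i0 + ∑ i ∈ Finset.univ.erase i0, q i) := peel
    _ = 1 + h1 * ∑ i, q i := by
        rw [Finset.add_sum_erase _ _ (Finset.mem_univ i0)]
    _ ≤ 1 + h1 * P' := by nlinarith

end Main
end Stmt19Aux

open Stmt19Aux

/-- If `P ≤ 1/h₂ − 1/h₁`, uniform power splitting with `ρ = Q/(h₁P)` and rank-one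
beamforming harvests exactly `Q` and achieves the maximal flexible time-switching
rate `log(1 + h₁P − Q)`. -/
theorem stmt19 {M N : ℕ} (H : Matrix (Fin N) (Fin M) ℂ) (h1 h2 P Q : ℝ)
    (hP : 0 < P) (hh2 : 0 < h2) (hh12 : h2 ≤ h1)
    (v1 : Fin M → ℂ) (hunit : ∑ i, Complex.normSq (v1 i) = 1)
    (heig : (Hᴴ * H) *ᵥ v1 = (h1 : ℂ) • v1)
    (hmax : ∀ (w : Fin M → ℂ) (c : ℝ), (Hᴴ * H) *ᵥ w = (c : ℂ) • w → w ≠ 0 → c ≤ h1)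
    (hsecond : ∀ (w : Fin M → ℂ) (c : ℝ), (Hᴴ * H) *ᵥ w = (c : ℂ) • w → w ≠ 0 →
      star v1 ⬝ᵥ w = 0 → c ≤ h2)
    (hreg : P ≤ 1 / h2 - 1 / h1) (hQ0 : 0 ≤ Q) (hQ : Q ≤ h1 * P) :
    (Q / (h1 * P)) *
        (H * ((P : ℂ) • vecMulVec v1 (star v1)) * Hᴴ).trace.re = Q ∧
    Real.log (1 + (1 - Q / (h1 * P)) * h1 * P) = Real.log (1 + h1 * P - Q) ∧
    Real.log ((1 + ((1 - Q / (h1 * P) : ℝ) : ℂ) •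
        (H * ((P : ℂ) • vecMulVec v1 (star v1)) * Hᴴ)).det.re) =
      Real.log (1 + h1 * P - Q) ∧
    IsGreatest {r : ℝ | ∃ S' : Matrix (Fin M) (Fin M) ℂ, S'.PosSemidef ∧
        S'.trace.re ≤ P - Q / h1 ∧ r = Real.log ((1 + H * S' * Hᴴ).det.re)}
      (Real.log (1 + h1 * P - Q)) := by
  have hh1 : 0 < h1 := lt_of_lt_of_le hh2 hh12
  have hh1P : 0 < h1 * P := mul_pos hh1 hP
  have hm : 0 < M := by
    by_contra h
    push_neg at h
    have hM0 : M = 0 := Nat.le_zero.1 h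
    subst hM0
    simp at hunit
  set zv := H *ᵥ v1 with hzv
  have hv1dot : star v1 ⬝ᵥ v1 = 1 := by
    rw [dotProduct]
    have : ∀ i, star v1 i * v1 i = (Complex.normSq (v1 i) : ℂ) := by
      intro i
      rw [Pi.star_apply, Complex.star_def, ← Complex.normSq_eq_conj_mul_self]
    rw [Finset.sum_congr rfl fun i _ => this i, ← Complex.ofReal_sum, hunit,
      Complex.ofReal_one]
  have hzdot : star zv ⬝ᵥ zv = (h1 : ℂ) := by
    rw [hzv, star_mulVec, ← dotProduct_mulVec, mulVec_mulVec, heig, dotProduct_smul,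
      smul_eq_mul, hv1dot, mul_one]
  have hmat : ∀ c : ℂ, H * (c • vecMulVec v1 (star v1)) * Hᴴ
      = c • vecMulVec zv (star zv) := by
    intro c
    rw [Matrix.mul_smul, Matrix.smul_mul, Stmt19Aux.mul_vecMulVec, Stmt19Aux.vecMulVec_mul, ← star_mulVec]
  have hval : 1 + (1 - Q / (h1 * P)) * h1 * P = 1 + h1 * P - Q := by
    field_simp
    ring
  refine ⟨?_, ?_, ?_, ?_, ?_⟩
  · -- harvested power
    rw [hmat, trace_smul, Stmt19Aux.trace_vecMulVec, hzdot]
    simp only [smul_eq_mul]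
    rw [← Complex.ofReal_mul, Complex.ofReal_re]
    rw [mul_comm h1 P] at hh1P ⊢
    exact div_mul_cancel₀ Q hh1P.ne'
  · rw [hval]
  · -- rate of power splitting scheme
    rw [hmat, smul_smul, det_one_add_smul_vecMulVec, hzdot]
    have : (1 : ℂ) + ((1 - Q / (h1 * P) : ℝ) : ℂ) * (P : ℂ) * (h1 : ℂ)
        = ((1 + (1 - Q / (h1 * P)) * P * h1 : ℝ) : ℂ) := by push_cast; ring
    rw [this, Complex.ofReal_re]
    congr 1
    rw [← hval]; ring
  · -- membership
    refine ⟨((P - Q / h1 : ℝ) : ℂ) • vecMulVec v1 (star v1), ?_, ?_, ?_⟩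
    · exact psd_real_smul (psd_vecMulVec v1) (by
        have : Q / h1 ≤ P := by
          rw [div_le_iff₀ hh1, mul_comm]
          exact hQ
        linarith)
    · rw [trace_smul, Stmt19Aux.trace_vecMulVec, hv1dot]
      simp
    · rw [hmat, det_one_add_smul_vecMulVec, hzdot]
      have : (1 : ℂ) + ((P - Q / h1 : ℝ) : ℂ) * (h1 : ℂ)
          = ((1 + (P - Q / h1) * h1 : ℝ) : ℂ) := by push_cast; ring
      rw [this, Complex.ofReal_re]
      congr 1
      field_simp
      ring
  · -- upper bound
    rintro r ⟨S', hpsd, htr, rfl⟩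
    have hpd : ((1 : Matrix (Fin N) (Fin N) ℂ) + H * S' * Hᴴ).PosDef :=
      one_add_posDef (hpsd.mul_mul_conjTranspose_same H)
    have hpos : 0 < ((1 : Matrix (Fin N) (Fin N) ℂ) + H * S' * Hᴴ).det.re :=
      (Complex.pos_iff.1 hpd.det_pos).1
    have hcap : P - Q / h1 ≤ 1 / h2 - 1 / h1 := by
      have : 0 ≤ Q / h1 := div_nonneg hQ0 hh1.le
      linarith
    have hb := det_bound H hh2 hh12 hm heig hmax hsecond hcap hpsd htr
    apply Real.log_le_log hpos
    refine hb.trans ?_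
    have : h1 * (P - Q / h1) = h1 * P - Q := by
      field_simp
    linarith [this.le]
end
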